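/- arXiv:1410.0195 — 6 statements merged into one kernel-verified Lean document; each statement's English description precedes it below -/
import Mathlib

section
/- If a finite crystallographic root system Φ is simply laced and an order ideal I ⊆ Φ⁺ of the root poset is not a star ideal, then every root γ ∈ I has support forming a path in the Dynkin diagram and all nonzero coordinates of γ equal to 1. -/
open scoped RealInnerProductSpace

/-- A finite crystallographic (reduced) root system in a Euclidean space `V`. -/
structure RootSystemData (V : Type*) [NormedAddCommGroup V] [InnerProductSpace ℝ V] where
  Φ : Set V
  finite : Φ.Finite
  nonzero : ∀ γ ∈ Φ, γ ≠ 0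
  neg_mem : ∀ γ ∈ Φ, -γ ∈ Φ
  reflect_mem : ∀ α ∈ Φ, ∀ β ∈ Φ, β - (2 * ⟪α, β⟫ / ⟪α, α⟫) • α ∈ Φ
  crystallographic : ∀ α ∈ Φ, ∀ β ∈ Φ, ∃ n : ℤ, 2 * ⟪α, β⟫ / ⟪α, α⟫ = (n : ℝ)
  reduced : ∀ γ ∈ Φ, ∀ t : ℝ, t • γ ∈ Φ → t = 1 ∨ t = -1

/-- A base (system of simple roots) for a root system: the simple roots form a basis of `V`
and every root has coordinates that are all nonnegative integers or all nonpositive integers. -/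
structure RootBase {V : Type*} [NormedAddCommGroup V] [InnerProductSpace ℝ V]
    (R : RootSystemData V) (ι : Type*) [Fintype ι] where
  b : Module.Basis ι ℝ V
  simple_mem : ∀ i, b i ∈ R.Φ
  coord_sign : ∀ γ ∈ R.Φ, (∀ i, 0 ≤ b.repr γ i) ∨ (∀ i, b.repr γ i ≤ 0)
  coord_int : ∀ γ ∈ R.Φ, ∀ i, ∃ n : ℤ, b.repr γ i = (n : ℝ)

namespace RootBase

variable {V : Type*} [NormedAddCommGroup V] [InnerProductSpace ℝ V]
  {R : RootSystemData V} {ι : Type*} [Fintype ι]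

/-- `γ` is a positive root. -/
def IsPos (B : RootBase R ι) (γ : V) : Prop := γ ∈ R.Φ ∧ ∀ i, 0 ≤ B.b.repr γ i

/-- The set of positive roots. -/
def Pos (B : RootBase R ι) : Set V := {γ | B.IsPos γ}

/-- The root poset order: coordinatewise comparison over the simple roots. -/
def rle (B : RootBase R ι) (γ γ' : V) : Prop := ∀ i, B.b.repr γ i ≤ B.b.repr γ' i

end RootBase

/-- All roots have the same length. -/
def RootSystemData.SimplyLaced {V : Type*} [NormedAddCommGroup V] [InnerProductSpace ℝ V]
    (R : RootSystemData V) : Prop := ∀ γ ∈ R.Φ, ∀ γ' ∈ R.Φ, ⟪γ, γ⟫ = ⟪γ', γ'⟫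

section Helpers

variable {V : Type*} [NormedAddCommGroup V] [InnerProductSpace ℝ V]
  {R : RootSystemData V} {ι : Type*} [Fintype ι]

lemma root_inner_pos {γ : V} (hγ : γ ∈ R.Φ) : 0 < ⟪γ, γ⟫ :=
  lt_of_le_of_ne real_inner_self_nonneg
    (fun e => R.nonzero γ hγ (inner_self_eq_zero.1 e.symm))

lemma sum_mem_root (hSL : R.SimplyLaced) {α β : V} (hα : α ∈ R.Φ) (hβ : β ∈ R.Φ)
    (hlt : ⟪α, β⟫ < 0) (hne : α + β ≠ 0) : α + β ∈ R.Φ := by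
  obtain ⟨n, hn⟩ := R.crystallographic α hα β hβ
  have hc : 0 < ⟪α, α⟫ := root_inner_pos hα
  have hββ : ⟪β, β⟫ = ⟪α, α⟫ := hSL β hβ α hα
  have hCS : ⟪α, β⟫ * ⟪α, β⟫ ≤ ⟪α, α⟫ * ⟪α, α⟫ := by
    have := real_inner_mul_inner_self_le α β
    rwa [hββ] at this
  have hnval : (n : ℝ) = 2 * ⟪α, β⟫ / ⟪α, α⟫ := hn.symm
  have hnneg : (n : ℝ) < 0 := by
    rw [hnval]
    exact div_neg_of_neg_of_pos (by linarith) hc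
  have hn2 : (n : ℝ) * (n : ℝ) ≤ 4 := by
    rw [hnval, div_mul_div_comm]
    rw [div_le_iff₀ (by positivity)]
    nlinarith
  have hnZ : n = -1 ∨ n = -2 := by
    have h1 : n < 0 := by exact_mod_cast hnneg
    have h2 : n * n ≤ 4 := by exact_mod_cast hn2
    have h3 : -2 ≤ n := by nlinarith
    omega
  rcases hnZ with h | h
  · have := R.reflect_mem α hα β hβ
    rw [hn, h] at this
    simpa [add_comm, sub_eq_add_neg] using this
  · exfalso
    apply hne
    have hab : ⟪α, β⟫ = -⟪α, α⟫ := by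
      rw [h] at hn
      push_cast at hn
      field_simp at hn
      linarith
    have hba : ⟪β, α⟫ = ⟪α, β⟫ := real_inner_comm α β
    have : ⟪α + β, α + β⟫ = 0 := by
      rw [inner_add_add_self, hba, hab, hββ]; ring
    exact inner_self_eq_zero.1 this

lemma sub_mem_root (hSL : R.SimplyLaced) {α β : V} (hα : α ∈ R.Φ) (hβ : β ∈ R.Φ)
    (hlt : 0 < ⟪α, β⟫) (hne : α ≠ β) : α - β ∈ R.Φ := by
  have h := sum_mem_root hSL hα (R.neg_mem β hβ)
    (by rw [inner_neg_right]; linarith) ?_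
  · simpa [sub_eq_add_neg] using h
  · rw [← sub_eq_add_neg, sub_ne_zero]; exact hne

lemma simple_inner_nonpos (hSL : R.SimplyLaced) (B : RootBase R ι) {i j : ι} (hij : i ≠ j) :
    ⟪B.b i, B.b j⟫ ≤ 0 := by
  classical
  by_contra h
  push_neg at h
  have hsub : B.b i - B.b j ∈ R.Φ :=
    sub_mem_root hSL (B.simple_mem i) (B.simple_mem j) h (fun e => hij (B.b.injective e))
  have hrepr : ∀ k, B.b.repr (B.b i - B.b j) k =
      (if i = k then (1:ℝ) else 0) - (if j = k then 1 else 0) := by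
    intro k
    rw [map_sub, Finsupp.sub_apply, B.b.repr_self, B.b.repr_self,
      Finsupp.single_apply, Finsupp.single_apply]
  rcases B.coord_sign _ hsub with hs | hs
  · have := hs j; rw [hrepr j, if_neg (by exact hij), if_pos rfl] at this; linarith
  · have := hs i; rw [hrepr i, if_pos rfl, if_neg (fun e => hij e.symm)] at this; linarith

lemma simple_inner_cases (hSL : R.SimplyLaced) (B : RootBase R ι) {i j : ι} (hij : i ≠ j) :
    ⟪B.b i, B.b j⟫ = 0 ∨ ⟪B.b i, B.b j⟫ = -(⟪B.b i, B.b i⟫) / 2 := by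
  classical
  have hα := B.simple_mem i
  have hβ := B.simple_mem j
  obtain ⟨n, hn⟩ := R.crystallographic _ hα _ hβ
  have hc : 0 < ⟪B.b i, B.b i⟫ := root_inner_pos hα
  have hββ : ⟪B.b j, B.b j⟫ = ⟪B.b i, B.b i⟫ := hSL _ hβ _ hα
  have hCS : ⟪B.b i, B.b j⟫ * ⟪B.b i, B.b j⟫ ≤ ⟪B.b i, B.b i⟫ * ⟪B.b i, B.b i⟫ := by
    have := real_inner_mul_inner_self_le (B.b i) (B.b j)
    rwa [hββ] at this
  have hle : ⟪B.b i, B.b j⟫ ≤ 0 := simple_inner_nonpos hSL B hij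
  have hnval : (n : ℝ) = 2 * ⟪B.b i, B.b j⟫ / ⟪B.b i, B.b i⟫ := hn.symm
  have hn2 : (n : ℝ) * (n : ℝ) ≤ 4 := by
    rw [hnval, div_mul_div_comm, div_le_iff₀ (by positivity)]
    nlinarith
  have hnle : (n : ℝ) ≤ 0 := by
    rw [hnval]
    exact div_nonpos_of_nonpos_of_nonneg (by linarith) hc.le
  have hnZ : n = 0 ∨ n = -1 ∨ n = -2 := by
    have h1 : n ≤ 0 := by exact_mod_cast hnle
    have h2 : n * n ≤ 4 := by exact_mod_cast hn2
    have h3 : -2 ≤ n := by nlinarith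
    omega
  have hval : ⟪B.b i, B.b j⟫ = (n : ℝ) * ⟪B.b i, B.b i⟫ / 2 := by
    field_simp at hn ⊢
    linarith
  rcases hnZ with h | h | h
  · left; rw [hval, h]; simp
  · right; rw [hval, h]; ring
  · exfalso
    have hab : ⟪B.b i, B.b j⟫ = -⟪B.b i, B.b i⟫ := by rw [hval, h]; ring
    have hba : ⟪B.b j, B.b i⟫ = ⟪B.b i, B.b j⟫ := real_inner_comm (B.b i) (B.b j)
    have hz : ⟪B.b i + B.b j, B.b i + B.b j⟫ = 0 := by
      rw [inner_add_add_self, hba, hab, hββ]; ring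
    have := inner_self_eq_zero.1 hz
    have h2 : B.b.repr (B.b i + B.b j) i = 1 := by
      rw [map_add, Finsupp.add_apply, B.b.repr_self, B.b.repr_self,
        Finsupp.single_apply, Finsupp.single_apply, if_pos rfl, if_neg (fun e => hij e.symm)]
      ring
    rw [this] at h2
    simp at h2

end Helpers

section Neighbors

variable {V : Type*} [NormedAddCommGroup V] [InnerProductSpace ℝ V]
  {R : RootSystemData V} {ι : Type*} [Fintype ι]

/-- In a path, a vertex has at most two neighbors. -/
lemma neighbor_card_le_two [DecidableEq ι] (B : RootBase R ι) (l : List ι) (hnd : l.Nodup)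
    (hfar : ∀ (p q : ℕ) (hp : p < l.length) (hq : q < l.length), p + 1 < q →
      ⟪B.b (l.get ⟨p, hp⟩), B.b (l.get ⟨q, hq⟩)⟫ = 0)
    {i : ι} (hi : i ∈ l) :
    ((l.toFinset.erase i).filter (fun j => ⟪B.b j, B.b i⟫ ≠ 0)).card ≤ 2 := by
  have hq : l.idxOf i < l.length := List.idxOf_lt_length_iff.2 hi
  set q := l.idxOf i with hqdef
  have hsub : ((l.toFinset.erase i).filter (fun j => ⟪B.b j, B.b i⟫ ≠ 0)) ⊆
      ({l.getD (q-1) i, l.getD (q+1) i} : Finset ι) := by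
    intro j hj
    simp only [Finset.mem_filter, Finset.mem_erase, List.mem_toFinset] at hj
    obtain ⟨⟨hji, hjl⟩, hjne⟩ := hj
    have hp : l.idxOf j < l.length := List.idxOf_lt_length_iff.2 hjl
    set p := l.idxOf j with hpdef
    have hgetp : l.get ⟨p, hp⟩ = j := List.idxOf_get hp
    have hgetq : l.get ⟨q, hq⟩ = i := List.idxOf_get hq
    have hpq : p ≠ q := by
      intro e
      apply hji
      rw [← hgetp, ← hgetq]
      congr 1
      exact Fin.ext e
    have h1 : ¬ (p + 1 < q) := fun h => hjne (by rw [← hgetp, ← hgetq]; exact hfar p q hp hq h)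
    have h2 : ¬ (q + 1 < p) := fun h => hjne (by
      rw [← hgetp, ← hgetq, real_inner_comm]
      exact hfar q p hq hp h)
    have hcase : p + 1 = q ∨ p = q + 1 := by omega
    simp only [Finset.mem_insert, Finset.mem_singleton]
    rcases hcase with h | h
    · left
      have hq1 : q - 1 < l.length := by omega
      have hpval : p = q - 1 := by omega
      rw [List.getD_eq_getElem _ _ hq1, ← hgetp]
      simp [hpval, List.get_eq_getElem]
    · right
      have hq1 : q + 1 < l.length := h ▸ hp
      rw [List.getD_eq_getElem _ _ hq1, ← hgetp]
      simp [h, List.get_eq_getElem]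
  calc ((l.toFinset.erase i).filter (fun j => ⟪B.b j, B.b i⟫ ≠ 0)).card
      ≤ ({l.getD (q-1) i, l.getD (q+1) i} : Finset ι).card := Finset.card_le_card hsub
    _ ≤ 2 := le_trans (Finset.card_insert_le _ _) (by simp)

end Neighbors

section Extend

variable {V : Type*} [NormedAddCommGroup V] [InnerProductSpace ℝ V]
  {R : RootSystemData V} {ι : Type*} [Fintype ι]

lemma path_extend_front (B : RootBase R ι) {l : List ι} {i : ι}
    (hnd : l.Nodup)
    (hchain : l.Chain' (fun p q => p ≠ q ∧ ⟪B.b p, B.b q⟫ ≠ 0))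
    (hfar : ∀ (p q : ℕ) (hp : p < l.length) (hq : q < l.length), p + 1 < q →
      ⟪B.b (l.get ⟨p, hp⟩), B.b (l.get ⟨q, hq⟩)⟫ = 0)
    (hil : i ∉ l) (h0 : 0 < l.length)
    (hadj : ⟪B.b i, B.b (l.get ⟨0, h0⟩)⟫ ≠ 0)
    (hzero : ∀ (p : ℕ) (hp : p < l.length), 0 < p → ⟪B.b i, B.b (l.get ⟨p, hp⟩)⟫ = 0) :
    (i :: l).Nodup ∧
    (i :: l).Chain' (fun p q => p ≠ q ∧ ⟪B.b p, B.b q⟫ ≠ 0) ∧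
    (∀ (p q : ℕ) (hp : p < (i::l).length) (hq : q < (i::l).length), p + 1 < q →
      ⟪B.b ((i::l).get ⟨p, hp⟩), B.b ((i::l).get ⟨q, hq⟩)⟫ = 0) := by
  refine ⟨List.nodup_cons.2 ⟨hil, hnd⟩, ?_, ?_⟩
  · cases l with
    | nil => simp at h0
    | cons j t =>
      refine List.isChain_cons_cons.2 ⟨⟨fun e => hil (e ▸ List.mem_cons_self), ?_⟩, hchain⟩
      simpa using hadj
  · intro p q hp hq hlt
    cases p with
    | zero =>
      cases q with
      | zero => omega
      | succ q' =>
        have hq' : q' < l.length := by simpa using hq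
        have : ((i::l).get ⟨q'+1, hq⟩) = l.get ⟨q', hq'⟩ := by
          simp [List.get_eq_getElem]
        rw [this]
        show ⟪B.b i, B.b (l.get ⟨q', hq'⟩)⟫ = 0
        exact hzero q' hq' (by omega)
    | succ p' =>
      cases q with
      | zero => omega
      | succ q' =>
        have hp' : p' < l.length := by simpa using hp
        have hq' : q' < l.length := by simpa using hq
        have e1 : ((i::l).get ⟨p'+1, hp⟩) = l.get ⟨p', hp'⟩ := by simp [List.get_eq_getElem]
        have e2 : ((i::l).get ⟨q'+1, hq⟩) = l.get ⟨q', hq'⟩ := by simp [List.get_eq_getElem]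
        rw [e1, e2]
        exact hfar p' q' hp' hq' (by omega)

lemma path_extend_back (B : RootBase R ι) {l : List ι} {i : ι}
    (hnd : l.Nodup)
    (hchain : l.Chain' (fun p q => p ≠ q ∧ ⟪B.b p, B.b q⟫ ≠ 0))
    (hfar : ∀ (p q : ℕ) (hp : p < l.length) (hq : q < l.length), p + 1 < q →
      ⟪B.b (l.get ⟨p, hp⟩), B.b (l.get ⟨q, hq⟩)⟫ = 0)
    (hil : i ∉ l) (h0 : 0 < l.length)
    (hadj : ⟪B.b (l.get ⟨l.length - 1, by omega⟩), B.b i⟫ ≠ 0)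
    (hzero : ∀ (p : ℕ) (hp : p < l.length), p + 1 < l.length →
      ⟪B.b (l.get ⟨p, hp⟩), B.b i⟫ = 0) :
    (l ++ [i]).Nodup ∧
    (l ++ [i]).Chain' (fun p q => p ≠ q ∧ ⟪B.b p, B.b q⟫ ≠ 0) ∧
    (∀ (p q : ℕ) (hp : p < (l ++ [i]).length) (hq : q < (l ++ [i]).length), p + 1 < q →
      ⟪B.b ((l ++ [i]).get ⟨p, hp⟩), B.b ((l ++ [i]).get ⟨q, hq⟩)⟫ = 0) := by
  have hlen : (l ++ [i]).length = l.length + 1 := by simp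
  have hgetl : ∀ (p : ℕ) (hp : p < l.length) (hp' : p < (l ++ [i]).length),
      (l ++ [i]).get ⟨p, hp'⟩ = l.get ⟨p, hp⟩ := by
    intro p hp hp'
    simp [List.get_eq_getElem, List.getElem_append_left hp]
  have hgeti : ∀ (hp' : l.length < (l ++ [i]).length),
      (l ++ [i]).get ⟨l.length, hp'⟩ = i := by
    intro hp'
    simp [List.get_eq_getElem, List.getElem_append_right (le_refl l.length)]
  refine ⟨?_, ?_, ?_⟩
  · simp [List.nodup_append, hil, hnd]; exact fun a ha e => hil (e ▸ ha)
  · rw [List.Chain', List.isChain_iff_getElem]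
    intro k hk
    rw [hlen] at hk
    simp only [add_lt_add_iff_right] at hk
    by_cases hkl : k + 1 < l.length
    · have e1 := hgetl k (by omega) (by rw [hlen]; omega)
      have e2 := hgetl (k+1) hkl (by rw [hlen]; omega)
      simp only [List.get_eq_getElem] at e1 e2
      rw [e1, e2]
      exact List.isChain_iff_getElem.1 hchain k (by omega)
    · have hk1 : k + 1 = l.length := by omega
      have e1 := hgetl k (by omega) (by rw [hlen]; omega)
      have e2 : (l ++ [i]).get ⟨k+1, by rw [hlen]; omega⟩ = i := by
        rw [show (⟨k+1, by rw [hlen]; omega⟩ : Fin (l ++ [i]).length)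
          = ⟨l.length, by rw [hlen]; omega⟩ from Fin.ext hk1]
        exact hgeti _
      simp only [List.get_eq_getElem] at e1 e2
      rw [e1, e2]
      constructor
      · intro e; exact hil (e ▸ List.get_mem l _)
      · have : k = l.length - 1 := by omega
        subst this
        exact hadj
  · intro p q hp hq hlt
    rw [hlen] at hp hq
    by_cases hql : q < l.length
    · have e1 := hgetl p (by omega) (by rw [hlen]; omega)
      have e2 := hgetl q hql (by rw [hlen]; omega)
      rw [e1, e2]
      exact hfar p q (by omega) hql hlt
    · have hq1 : q = l.length := by omega
      have e1 := hgetl p (by omega) (by rw [hlen]; omega)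
      have e2 : (l ++ [i]).get ⟨q, by rw [hlen]; omega⟩ = i := by
        rw [show (⟨q, by rw [hlen]; omega⟩ : Fin (l ++ [i]).length)
          = ⟨l.length, by rw [hlen]; omega⟩ from Fin.ext hq1]
        exact hgeti _
      rw [e1, e2]
      exact hzero p (by omega) (by omega)

end Extend

section Helpers2

variable {V : Type*} [NormedAddCommGroup V] [InnerProductSpace ℝ V]
  {R : RootSystemData V} {ι : Type*} [Fintype ι]

lemma sum_of_zero_or {κ : Type*} (s : Finset κ) (f : κ → ℝ) (c : ℝ)
    [DecidablePred (fun j => f j ≠ 0)]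
    (h : ∀ j ∈ s, f j = 0 ∨ f j = -c/2) :
    ∑ j ∈ s, f j = -((s.filter (fun j => f j ≠ 0)).card : ℝ) * c / 2 := by
  have hval : ∀ j ∈ s.filter (fun j => f j ≠ 0), f j = -c/2 := by
    intro j hj
    obtain ⟨hjs, hjne⟩ := Finset.mem_filter.1 hj
    exact (h j hjs).resolve_left hjne
  rw [← Finset.sum_filter_ne_zero s, Finset.sum_congr rfl hval, Finset.sum_const,
    nsmul_eq_mul]
  ring

lemma triple_repr [DecidableEq ι] (B : RootBase R ι) (x y z j : ι) :
    B.b.repr (B.b x + B.b y + B.b z) j =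
      (if x = j then (1:ℝ) else 0) + (if y = j then 1 else 0) + (if z = j then 1 else 0) := by
  rw [map_add, map_add, Finsupp.add_apply, Finsupp.add_apply, B.b.repr_self, B.b.repr_self,
    B.b.repr_self, Finsupp.single_apply, Finsupp.single_apply, Finsupp.single_apply]

lemma triple_ne_zero [DecidableEq ι] (B : RootBase R ι) {x y z : ι} (hxy : x ≠ y) (hzy : z ≠ y) :
    B.b x + B.b y + B.b z ≠ 0 := by
  intro h
  have := triple_repr B x y z y
  rw [h, map_zero, Finsupp.coe_zero, Pi.zero_apply, if_neg hxy, if_pos rfl, if_neg hzy] at this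
  norm_num at this

lemma triple_root (hSL : R.SimplyLaced) (B : RootBase R ι) {x y z : ι}
    (hxy : x ≠ y) (hyz : y ≠ z) (hxz : x ≠ z)
    (h1 : ⟪B.b x, B.b y⟫ ≠ 0) (h2 : ⟪B.b y, B.b z⟫ ≠ 0) (h3 : ⟪B.b x, B.b z⟫ = 0) :
    B.b x + B.b y + B.b z ∈ R.Φ := by
  classical
  have hxyΦ : B.b x + B.b y ∈ R.Φ := by
    refine sum_mem_root hSL (B.simple_mem x) (B.simple_mem y)
      (lt_of_le_of_ne (simple_inner_nonpos hSL B hxy) h1) ?_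
    intro h
    have := triple_repr B x y x y  -- dummy; direct: repr at y
    have h2' : B.b.repr (B.b x + B.b y) y = 1 := by
      rw [map_add, Finsupp.add_apply, B.b.repr_self, B.b.repr_self,
        Finsupp.single_apply, Finsupp.single_apply, if_neg hxy, if_pos rfl]
      norm_num
    rw [h, map_zero] at h2'
    norm_num at h2'
  refine sum_mem_root hSL hxyΦ (B.simple_mem z) ?_ ?_
  · rw [inner_add_left, h3, zero_add]
    exact lt_of_le_of_ne (simple_inner_nonpos hSL B hyz) h2
  · exact triple_ne_zero B hxy (Ne.symm hyz)

end Helpers2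

/-- In a simply laced root system, if an order ideal I of the root poset is not a star
ideal, then every root in I has all coordinates 0 or 1, and its support is a path in the
Dynkin diagram. -/
theorem not_star_ideal_path {V : Type*} [NormedAddCommGroup V] [InnerProductSpace ℝ V]
    {ι : Type*} [Fintype ι] (R : RootSystemData V) (B : RootBase R ι)
    (hSL : R.SimplyLaced)
    (I : Set V) (hI : I ⊆ B.Pos)
    (hideal : ∀ γ ∈ I, ∀ δ, B.IsPos δ → B.rle δ γ → δ ∈ I)
    (hstar : ¬ ∃ i₁ i₂ i₃ i₄ : ι, ([i₁, i₂, i₃, i₄] : List ι).Nodup ∧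
        B.b i₁ + B.b i₂ + B.b i₃ ∈ R.Φ ∩ I ∧
        B.b i₁ + B.b i₂ + B.b i₄ ∈ R.Φ ∩ I ∧
        B.b i₂ + B.b i₃ + B.b i₄ ∈ R.Φ ∩ I) :
    ∀ γ ∈ I, (∀ i, B.b.repr γ i = 0 ∨ B.b.repr γ i = 1) ∧
      ∃ l : List ι, l.Nodup ∧ (∀ i, B.b.repr γ i ≠ 0 ↔ i ∈ l) ∧
        l.Chain' (fun p q => p ≠ q ∧ ⟪B.b p, B.b q⟫ ≠ 0) ∧
        (∀ (p q : ℕ) (hp : p < l.length) (hq : q < l.length), p + 1 < q →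
          ⟪B.b (l.get ⟨p, hp⟩), B.b (l.get ⟨q, hq⟩)⟫ = 0) := by
  classical
  suffices H : ∀ (n : ℕ) (γ : V), γ ∈ I → (∑ j, B.b.repr γ j) ≤ (n : ℝ) →
      (∀ i, B.b.repr γ i = 0 ∨ B.b.repr γ i = 1) ∧
      ∃ l : List ι, l.Nodup ∧ (∀ i, B.b.repr γ i ≠ 0 ↔ i ∈ l) ∧
        l.Chain' (fun p q => p ≠ q ∧ ⟪B.b p, B.b q⟫ ≠ 0) ∧
        (∀ (p q : ℕ) (hp : p < l.length) (hq : q < l.length), p + 1 < q →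
          ⟪B.b (l.get ⟨p, hp⟩), B.b (l.get ⟨q, hq⟩)⟫ = 0) by
    intro γ hγ
    choose g hg using B.coord_int γ (hI hγ).1
    have hgval : ∀ j, B.b.repr γ j = ((g j).toNat : ℝ) := by
      intro j
      have h0 : (0:ℝ) ≤ (g j : ℝ) := (hg j) ▸ (hI hγ).2 j
      have h0' : (0:ℤ) ≤ g j := by exact_mod_cast h0
      rw [hg j]
      rw [show ((g j).toNat : ℝ) = (((g j).toNat : ℤ) : ℝ) by push_cast; ring,
        Int.toNat_of_nonneg h0']
    refine H (∑ j, (g j).toNat) γ hγ ?_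
    rw [Finset.sum_congr rfl (fun j _ => hgval j)]
    push_cast
    exact le_refl _
  intro n
  induction n using Nat.strong_induction_on with
  | _ n ih =>
  intro γ hγI hht
  have hγΦ : γ ∈ R.Φ := (hI hγI).1
  have hnn : ∀ j, 0 ≤ B.b.repr γ j := (hI hγI).2
  have hge1 : ∀ j, B.b.repr γ j ≠ 0 → 1 ≤ B.b.repr γ j := by
    intro j hj
    obtain ⟨m, hm⟩ := B.coord_int γ hγΦ j
    have h0 := hnn j
    rw [hm] at hj h0 ⊢
    have hm0 : (0:ℤ) ≤ m := by exact_mod_cast h0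
    have hmne : m ≠ 0 := by exact_mod_cast hj
    have : (1:ℤ) ≤ m := by omega
    exact_mod_cast this
  -- find a simple root i with positive coefficient and positive inner product
  have hsum : γ = ∑ j, B.b.repr γ j • B.b j := (B.b.sum_repr γ).symm
  have hinner : ⟪γ, γ⟫ = ∑ j, B.b.repr γ j * ⟪γ, B.b j⟫ := by
    nth_rewrite 2 [hsum]
    rw [inner_sum]
    exact Finset.sum_congr rfl (fun j _ => real_inner_smul_right γ (B.b j) _)
  obtain ⟨i, hi⟩ : ∃ i, 0 < B.b.repr γ i * ⟪γ, B.b i⟫ := by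
    by_contra h
    push_neg at h
    have h1 : ∑ j, B.b.repr γ j * ⟪γ, B.b j⟫ ≤ 0 :=
      Finset.sum_nonpos (fun j _ => h j)
    have h2 := root_inner_pos hγΦ
    rw [hinner] at h2
    linarith
  have hci : 0 < B.b.repr γ i := by
    rcases lt_or_eq_of_le (hnn i) with h | h
    · exact h
    · exfalso; rw [← h] at hi; simp at hi
  have hγbi : 0 < ⟪γ, B.b i⟫ := by
    rcases lt_trichotomy (⟪γ, B.b i⟫) 0 with h | h | h
    · exfalso; nlinarith
    · exfalso; rw [h] at hi; simp at hi
    · exact h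
  by_cases hγi : γ = B.b i
  · -- γ is the simple root i
    subst hγi
    have hrepr : ∀ j, B.b.repr (B.b i) j = if i = j then (1:ℝ) else 0 := by
      intro j; rw [B.b.repr_self, Finsupp.single_apply]
    constructor
    · intro j; rw [hrepr j]; split <;> simp
    · refine ⟨[i], by simp, ?_, by simp [List.Chain'], ?_⟩
      · intro j
        rw [hrepr j]
        constructor
        · intro h
          by_cases e : i = j
          · simp [e]
          · rw [if_neg e] at h; simp at h
        · intro h
          simp at h
          rw [if_pos h.symm]
          norm_num
      · intro p q hp hq hlt
        simp at hp hq
        omega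
  · -- inductive step
    have hδΦ : γ - B.b i ∈ R.Φ := sub_mem_root hSL hγΦ (B.simple_mem i) hγbi hγi
    set δ := γ - B.b i with hδdef
    have hreprδ : ∀ j, B.b.repr δ j = B.b.repr γ j - (if i = j then 1 else 0) := by
      intro j
      rw [hδdef, map_sub, Finsupp.sub_apply, B.b.repr_self, Finsupp.single_apply]
    have hδnn : ∀ j, 0 ≤ B.b.repr δ j := by
      rcases B.coord_sign δ hδΦ with hs | hs
      · exact hs
      · exfalso
        have hj0 : ∀ j, j ≠ i → B.b.repr γ j = 0 := by
          intro j hj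
          have h1 := hs j
          rw [hreprδ j, if_neg (fun e => hj e.symm)] at h1
          linarith [hnn j]
        have hile : B.b.repr γ i ≤ 1 := by
          have h1 := hs i
          rw [hreprδ i, if_pos rfl] at h1
          linarith
        have hi1 : B.b.repr γ i = 1 := le_antisymm hile (hge1 i (ne_of_gt hci))
        apply hγi
        calc γ = ∑ j, B.b.repr γ j • B.b j := hsum
          _ = B.b.repr γ i • B.b i :=
            Finset.sum_eq_single i (fun j _ hj => by rw [hj0 j hj, zero_smul])
              (fun h => absurd (Finset.mem_univ i) h)
          _ = B.b i := by rw [hi1, one_smul]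
    have hδpos : B.IsPos δ := ⟨hδΦ, hδnn⟩
    have hδI : δ ∈ I := by
      refine hideal γ hγI δ hδpos (fun j => ?_)
      rw [hreprδ j]
      split <;> linarith
    have hhtδ : (∑ j, B.b.repr δ j) = (∑ j, B.b.repr γ j) - 1 := by
      rw [Finset.sum_congr rfl (fun j (_ : j ∈ Finset.univ) => hreprδ j),
        Finset.sum_sub_distrib]
      congr 1
      simp
    have hn1 : 1 ≤ n := by
      have h1 : (1:ℝ) ≤ B.b.repr γ i := hge1 i (ne_of_gt hci)
      have h2 : B.b.repr γ i ≤ ∑ j, B.b.repr γ j :=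
        Finset.single_le_sum (fun j _ => hnn j) (Finset.mem_univ i)
      have h3 : (1:ℝ) ≤ (n:ℝ) := le_trans h1 (le_trans h2 hht)
      exact_mod_cast h3
    obtain ⟨hd01, l, hnd, hsupp, hchain, hfar⟩ := ih (n-1) (by omega) δ hδI (by
      rw [hhtδ]
      have : ((n - 1 : ℕ) : ℝ) = (n : ℝ) - 1 := by
        rw [Nat.cast_sub hn1]; norm_num
      rw [this]
      linarith)
    set c := ⟪B.b i, B.b i⟫ with hcdef
    have hc : 0 < c := root_inner_pos (B.simple_mem i)
    have hδsum : δ = ∑ j ∈ l.toFinset, B.b j := by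
      have h1 : δ = ∑ j, B.b.repr δ j • B.b j := (B.b.sum_repr δ).symm
      rw [h1, ← Finset.sum_subset (Finset.subset_univ l.toFinset) ?_]
      · refine Finset.sum_congr rfl (fun j hj => ?_)
        have hj1 : B.b.repr δ j = 1 := by
          rcases hd01 j with h | h
          · exact absurd h ((hsupp j).2 (List.mem_toFinset.1 hj))
          · exact h
        rw [hj1, one_smul]
      · intro j _ hj
        have hj0 : B.b.repr δ j = 0 := by
          by_contra h
          exact hj (List.mem_toFinset.2 ((hsupp j).1 h))
        rw [hj0, zero_smul]
    have hδbi : ⟪δ, B.b i⟫ = -c/2 := by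
      have hγγ : ⟪γ, γ⟫ = c := hSL γ hγΦ (B.b i) (B.simple_mem i)
      have hδδ : ⟪δ, δ⟫ = c := hSL δ hδΦ (B.b i) (B.simple_mem i)
      have hγδ : γ = δ + B.b i := by rw [hδdef]; abel
      have hexp := inner_add_add_self (𝕜 := ℝ) δ (B.b i)
      have hba : ⟪B.b i, δ⟫ = ⟪δ, B.b i⟫ := real_inner_comm _ _
      rw [← hγδ, hγγ, hδδ, hba, ← hcdef] at hexp
      linarith
    have hsumeq : ∑ j ∈ l.toFinset, ⟪B.b j, B.b i⟫ = -c/2 := by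
      rw [← hδbi, hδsum, sum_inner]
    have hcases : ∀ j, j ≠ i → ⟪B.b j, B.b i⟫ = 0 ∨ ⟪B.b j, B.b i⟫ = -c/2 := by
      intro j hji
      have hjj : ⟪B.b j, B.b j⟫ = c := hSL _ (B.simple_mem j) _ (B.simple_mem i)
      rcases simple_inner_cases hSL B hji with h | h
      · exact Or.inl h
      · right; rw [hjj] at h; linarith
    rcases hd01 i with hdi0 | hdi1
    · -- i is not in the support of δ
      have hil : i ∉ l := fun h => (hsupp i).2 h hdi0
      set T := l.toFinset.filter (fun j => ⟪B.b j, B.b i⟫ ≠ 0) with hTdef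
      have hTsum : ∑ j ∈ l.toFinset, ⟪B.b j, B.b i⟫ = -(T.card : ℝ) * c / 2 :=
        sum_of_zero_or _ _ c
          (fun j hj => hcases j (fun e => hil (e ▸ List.mem_toFinset.1 hj)))
      have hcard1 : T.card = 1 := by
        have h1 : (T.card : ℝ) = 1 := by
          rw [hTsum] at hsumeq
          have h2 := mul_right_cancel₀ (ne_of_gt hc)
            (show (T.card:ℝ) * c = 1 * c by linarith)
          linarith
        exact_mod_cast h1
      obtain ⟨js, hjsT⟩ := Finset.card_eq_one.1 hcard1
      have hjsin : js ∈ T := hjsT ▸ Finset.mem_singleton_self js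
      have hjs_mem : js ∈ l := List.mem_toFinset.1 (Finset.mem_filter.1 hjsin).1
      have hjs_adj : ⟪B.b js, B.b i⟫ ≠ 0 := (Finset.mem_filter.1 hjsin).2
      have huniq : ∀ j ∈ l, j ≠ js → ⟪B.b j, B.b i⟫ = 0 := by
        intro j hj hne
        by_contra h
        have hjT : j ∈ T := Finset.mem_filter.2 ⟨List.mem_toFinset.2 hj, h⟩
        rw [hjsT] at hjT
        exact hne (Finset.mem_singleton.1 hjT)
      have hjsi : js ≠ i := fun e => hil (e ▸ hjs_mem)
      have hm : l.idxOf js < l.length := List.idxOf_lt_length_iff.2 hjs_mem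
      set m := l.idxOf js with hmdef
      have hgetm : l.get ⟨m, hm⟩ = js := List.idxOf_get hm
      have hgetinj : ∀ (p q : ℕ) (hp : p < l.length) (hq : q < l.length),
          l.get ⟨p, hp⟩ = l.get ⟨q, hq⟩ → p = q := by
        intro p q hp hq e
        exact congrArg Fin.val (hnd.get_inj_iff.1 e)
      have hzero_pos : ∀ (p : ℕ) (hp : p < l.length), p ≠ m →
          ⟪B.b (l.get ⟨p, hp⟩), B.b i⟫ = 0 := by
        intro p hp hpm
        refine huniq _ (List.get_mem l _) (fun e => hpm ?_)
        exact hgetinj p m hp hm (by rw [hgetm, e])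
      have hreprγ : ∀ j, B.b.repr γ j = B.b.repr δ j + (if i = j then 1 else 0) := by
        intro j; rw [hreprδ j]; ring
      have hcoord : ∀ j, B.b.repr γ j = 0 ∨ B.b.repr γ j = 1 := by
        intro j
        rw [hreprγ j]
        by_cases e : i = j
        · rw [if_pos e, ← e, hdi0]; right; norm_num
        · rw [if_neg e, add_zero]; exact hd01 j
      have hsuppγ : ∀ j, B.b.repr γ j ≠ 0 ↔ (j ∈ l ∨ j = i) := by
        intro j
        by_cases e : i = j
        · subst e
          rw [hreprγ i, hdi0, if_pos rfl]
          simp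
        · rw [hreprγ j, if_neg e, add_zero, hsupp j]
          constructor
          · exact fun h => Or.inl h
          · rintro (h | rfl)
            · exact h
            · exact absurd rfl e
      have h1le : ∀ w, (w ∈ l ∨ w = i) → 1 ≤ B.b.repr γ w := by
        intro w hw
        rcases hw with hw | rfl
        · have hw1 : B.b.repr δ w = 1 := (hd01 w).resolve_left ((hsupp w).2 hw)
          rw [hreprγ w, hw1]
          split <;> norm_num
        · rw [hreprγ w, hdi0, if_pos rfl]; norm_num
      by_cases hm0 : m = 0
      · -- js is the head of the path: prepend i
        have h0 : 0 < l.length := by omega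
        obtain ⟨hnd', hchain', hfar'⟩ := path_extend_front B hnd hchain hfar hil h0
          (by
            have e0 : l.get ⟨0, h0⟩ = js := by
              rw [← hgetm]; congr 1; exact Fin.ext hm0.symm
            rw [e0, real_inner_comm]
            exact hjs_adj)
          (fun p hp hppos => by
            rw [real_inner_comm]
            exact hzero_pos p hp (by omega))
        refine ⟨hcoord, i :: l, hnd', ?_, hchain', hfar'⟩
        intro j
        rw [hsuppγ j, List.mem_cons]
        tauto
      · by_cases hml : m = l.length - 1
        · -- js is the last vertex: append i
          obtain ⟨hnd', hchain', hfar'⟩ := path_extend_back B hnd hchain hfar hil (by omega)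
            (by
              have e0 : l.get ⟨l.length - 1, by omega⟩ = js := by
                rw [show (⟨l.length - 1, by omega⟩ : Fin l.length) = ⟨m, hm⟩ from
                  Fin.ext hml.symm]
                exact hgetm
              rw [e0]
              exact hjs_adj)
            (fun p hp hpl => hzero_pos p hp (by omega))
          refine ⟨hcoord, l ++ [i], hnd', ?_, hchain', hfar'⟩
          intro j
          rw [hsuppγ j, List.mem_append, List.mem_singleton]
        · -- js is interior: build a star, contradiction
          exfalso
          have hm1 : 0 < m := Nat.pos_of_ne_zero hm0
          have hm2 : m + 1 < l.length := by omega
          have hm1' : m - 1 < l.length := by omega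
          set jm := l.get ⟨m-1, hm1'⟩ with hjmdef
          set jp := l.get ⟨m+1, hm2⟩ with hjpdef
          have hjm_mem : jm ∈ l := List.get_mem l _
          have hjp_mem : jp ∈ l := List.get_mem l _
          have hne1 : jm ≠ js := by
            intro e
            rw [← hgetm] at e
            have := hgetinj _ _ hm1' hm e
            omega
          have hne2 : js ≠ jp := by
            intro e
            rw [← hgetm] at e
            have := hgetinj _ _ hm hm2 e
            omega
          have hne13 : jm ≠ jp := by
            intro e
            have := hgetinj _ _ hm1' hm2 e
            omega
          have hjmi : jm ≠ i := fun e => hil (e ▸ hjm_mem)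
          have hjpi : jp ≠ i := fun e => hil (e ▸ hjp_mem)
          have hchain_get := List.isChain_iff_getElem.1 hchain
          have hadj1 := hchain_get (m-1) (by omega)
          have hadj2 := hchain_get m (by omega)
          have e1 : l.get ⟨m-1+1, by omega⟩ = js := by
            rw [show (⟨m-1+1, by omega⟩ : Fin l.length) = ⟨m, hm⟩ from
              Fin.ext (show m-1+1 = m by omega)]
            exact hgetm
          have ha1 : ⟪B.b jm, B.b js⟫ ≠ 0 := by
            have h : ⟪B.b jm, B.b (l.get ⟨m-1+1, by omega⟩)⟫ ≠ 0 := hadj1.2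
            rwa [e1] at h
          have ha2 : ⟪B.b js, B.b jp⟫ ≠ 0 := by
            have h : ⟪B.b (l.get ⟨m, hm⟩), B.b jp⟫ ≠ 0 := hadj2.2
            rwa [hgetm] at h
          have hfar13 : ⟪B.b jm, B.b jp⟫ = 0 := hfar (m-1) (m+1) hm1' hm2 (by omega)
          have hz_m : ⟪B.b jm, B.b i⟫ = 0 := hzero_pos (m-1) hm1' (by omega)
          have hz_p : ⟪B.b jp, B.b i⟫ = 0 := hzero_pos (m+1) hm2 (by omega)
          have hr1 : B.b jm + B.b js + B.b jp ∈ R.Φ :=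
            triple_root hSL B hne1 hne2 hne13 ha1 ha2 hfar13
          have hr2 : B.b jm + B.b js + B.b i ∈ R.Φ :=
            triple_root hSL B hne1 hjsi hjmi ha1 hjs_adj hz_m
          have hr3' : B.b jp + B.b js + B.b i ∈ R.Φ :=
            triple_root hSL B (Ne.symm hne2) hjsi hjpi
              (by rw [real_inner_comm]; exact ha2) hjs_adj hz_p
          have hr3 : B.b js + B.b jp + B.b i ∈ R.Φ := by
            rwa [show B.b jp + B.b js + B.b i = B.b js + B.b jp + B.b i by abel] at hr3'
          have hIsPos : ∀ x y z : ι, B.b x + B.b y + B.b z ∈ R.Φ →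
              B.IsPos (B.b x + B.b y + B.b z) := by
            intro x y z h
            refine ⟨h, fun j => ?_⟩
            rw [triple_repr B x y z j]
            split_ifs <;> norm_num
          have hrle : ∀ x y z : ι, x ≠ y → y ≠ z → x ≠ z →
              (x ∈ l ∨ x = i) → (y ∈ l ∨ y = i) → (z ∈ l ∨ z = i) →
              B.rle (B.b x + B.b y + B.b z) γ := by
            intro x y z hxy hyz hxz hx hy hz j
            rw [triple_repr B x y z j]
            by_cases ex : x = j
            · rw [if_pos ex, if_neg (fun e => hxy (ex.trans e.symm)),
                if_neg (fun e => hxz (ex.trans e.symm))]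
              have := h1le x hx; rw [ex] at this; linarith
            · by_cases ey : y = j
              · rw [if_neg ex, if_pos ey, if_neg (fun e => hyz (ey.trans e.symm))]
                have := h1le y hy; rw [ey] at this; linarith
              · by_cases ez : z = j
                · rw [if_neg ex, if_neg ey, if_pos ez]
                  have := h1le z hz; rw [ez] at this; linarith
                · rw [if_neg ex, if_neg ey, if_neg ez]
                  simpa using hnn j
          apply hstar
          refine ⟨jm, js, jp, i, ?_, ⟨hr1, ?_⟩, ⟨hr2, ?_⟩, ⟨hr3, ?_⟩⟩
          · simp [hne1, hne2, hne13, hjmi, hjsi, hjpi]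
          · exact hideal γ hγI _ (hIsPos _ _ _ hr1)
              (hrle _ _ _ hne1 hne2 hne13 (Or.inl hjm_mem) (Or.inl hjs_mem) (Or.inl hjp_mem))
          · exact hideal γ hγI _ (hIsPos _ _ _ hr2)
              (hrle _ _ _ hne1 hjsi hjmi (Or.inl hjm_mem) (Or.inl hjs_mem) (Or.inr rfl))
          · exact hideal γ hγI _ (hIsPos _ _ _ hr3)
              (hrle _ _ _ hne2 hjpi hjsi (Or.inl hjs_mem) (Or.inl hjp_mem) (Or.inr rfl))
    · -- i is in the support of δ: impossible (would need 3 neighbors in a path)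
      exfalso
      have hil : i ∈ l := (hsupp i).1 (by rw [hdi1]; norm_num)
      have hsplit : ∑ j ∈ l.toFinset, ⟪B.b j, B.b i⟫
          = ⟪B.b i, B.b i⟫ + ∑ j ∈ l.toFinset.erase i, ⟪B.b j, B.b i⟫ :=
        (Finset.add_sum_erase _ _ (List.mem_toFinset.2 hil)).symm
      have herase : ∑ j ∈ l.toFinset.erase i, ⟪B.b j, B.b i⟫ = -(3*c)/2 := by
        rw [hsplit, ← hcdef] at hsumeq
        linarith
      set T := (l.toFinset.erase i).filter (fun j => ⟪B.b j, B.b i⟫ ≠ 0) with hTdef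
      have hTsum : ∑ j ∈ l.toFinset.erase i, ⟪B.b j, B.b i⟫ = -(T.card : ℝ) * c / 2 :=
        sum_of_zero_or _ _ c (fun j hj => hcases j (Finset.ne_of_mem_erase hj))
      have hcard3 : (T.card : ℝ) = 3 := by
        rw [hTsum] at herase
        have h2 := mul_right_cancel₀ (ne_of_gt hc)
          (show (T.card:ℝ) * c = 3 * c by linarith)
        linarith
      have hcard2 : T.card ≤ 2 := neighbor_card_le_two B l hnd hfar hil
      have : (T.card : ℝ) ≤ 2 := by exact_mod_cast hcard2
      linarith
end

section
/- In the root poset of a root system of type Aₙ, every order ideal is chain peelable. -/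
/-- A set `s` (with order relation `r`) is *chain peelable* if it is a chain, or an
order filter of `s` which is a chain containing a minimal element of `s` can be removed,
leaving a chain peelable set. -/
inductive ChainPeelable {α : Type*} (r : α → α → Prop) : Set α → Prop
  | chain (s : Set α) (h : IsChain r s) : ChainPeelable r s
  | peel (s F : Set α) (hFs : F ⊆ s) (hchain : IsChain r F)
      (hfilter : ∀ x ∈ F, ∀ y ∈ s, r x y → y ∈ F)
      (hmin : ∃ m ∈ F, ∀ y ∈ s, r y m → y = m)
      (hrest : ChainPeelable r (s \ F)) : ChainPeelable r s

lemma typeA_aux (n : ℕ) : ∀ k (I : Set (Fin n × Fin n)), I.ncard ≤ k →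
    (∀ p ∈ I, p.1 ≤ p.2) →
    (∀ p ∈ I, ∀ q : Fin n × Fin n, q.1 ≤ q.2 → (p.1 ≤ q.1 ∧ q.2 ≤ p.2) → q ∈ I) →
    ChainPeelable (fun p q : Fin n × Fin n => q.1 ≤ p.1 ∧ p.2 ≤ q.2) I := by
  intro k
  induction k with
  | zero =>
    intro I hcard _ _
    have hIe : I = ∅ := by
      have := Set.ncard_eq_zero (Set.toFinite I)
      exact this.mp (Nat.le_zero.mp hcard)
    subst hIe
    exact ChainPeelable.chain ∅ (by simp)
  | succ k ih =>
    intro I hcard hI hideal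
    rcases Set.eq_empty_or_nonempty I with hIe | hne
    · subst hIe; exact ChainPeelable.chain ∅ (by simp)
    · obtain ⟨p0, hp0⟩ := hne
      set S : Set (Fin n) := {a | ∃ j, (a, j) ∈ I} with hSdef
      have hSne : S.Nonempty := ⟨p0.1, p0.2, by simpa using hp0⟩
      obtain ⟨i, hiS, hmin⟩ := Set.exists_min_image S id (Set.toFinite S) hSne
      have hmem1 : ∀ y ∈ I, i ≤ y.1 := by
        intro y hy
        exact hmin y.1 ⟨y.2, by simpa using hy⟩
      set F : Set (Fin n × Fin n) := {p ∈ I | p.1 = i} with hFdef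
      have hii : (i, i) ∈ I := by
        obtain ⟨j, hj⟩ := hiS
        exact hideal (i, j) hj (i, i) le_rfl ⟨le_rfl, hI _ hj⟩
      have hiiF : (i, i) ∈ F := ⟨hii, rfl⟩
      refine ChainPeelable.peel I F (fun p hp => hp.1) ?_ ?_ ?_ ?_
      · -- chain
        intro p hp q hq hne
        rcases le_total p.2 q.2 with h | h
        · exact Or.inl ⟨hq.2 ▸ hp.2.ge, h⟩
        · exact Or.inr ⟨hp.2 ▸ hq.2.ge, h⟩
      · -- filter
        intro x hx y hy hxy
        refine ⟨hy, le_antisymm (hx.2 ▸ hxy.1) (hmem1 y hy)⟩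
      · -- minimal element
        refine ⟨(i, i), hiiF, ?_⟩
        intro y hy hyr
        have h1 : i ≤ y.1 := hyr.1
        have h2 : y.2 ≤ i := hyr.2
        have h3 : y.1 ≤ y.2 := hI y hy
        have e1 : y.1 = i := le_antisymm (h3.trans h2) h1
        have e2 : y.2 = i := le_antisymm h2 (h1.trans h3)
        exact Prod.ext e1 e2
      · -- rest
        apply ih
        · have hdiff : (I \ F).ncard = I.ncard - F.ncard :=
            Set.ncard_diff (fun p hp => hp.1) (Set.toFinite F)
          have hF1 : 1 ≤ F.ncard := (Set.ncard_pos (Set.toFinite F)).mpr ⟨_, hiiF⟩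
          omega
        · exact fun p hp => hI p hp.1
        · intro p hp q hq hle
          refine ⟨hideal p hp.1 q hq hle, ?_⟩
          intro hqF
          have : i < p.1 := lt_of_le_of_ne (hmem1 p hp.1) (fun h => hp.2 ⟨hp.1, h.symm⟩)
          have : p.1 ≤ q.1 := hle.1
          exact absurd hqF.2 (by omega)

/-- In the type Aₙ root poset (positive roots are the intervals [i, j] of simple roots,
ordered by inclusion, i.e. coordinatewise), every order ideal is chain peelable. -/
theorem typeA_ideal_chainPeelable (n : ℕ) (I : Set (Fin n × Fin n))
    (hI : ∀ p ∈ I, p.1 ≤ p.2)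
    (hideal : ∀ p ∈ I, ∀ q : Fin n × Fin n, q.1 ≤ q.2 →
      (p.1 ≤ q.1 ∧ q.2 ≤ p.2) → q ∈ I) :
    ChainPeelable (fun p q : Fin n × Fin n => q.1 ≤ p.1 ∧ p.2 ≤ q.2) I :=
  typeA_aux n I.ncard I le_rfl hI hideal
end

section
/- In the root poset of a root system of type Bₙ (n ≥ 2), the full poset Φ⁺ is chain peelable; consequently every order ideal of the type Bₙ root poset is chain peelable. -/
/-- The standard basis vector eᵢ of ℤⁿ. -/
def eB (n : ℕ) (i : Fin n) : Fin n → ℤ := fun k => if k = i then 1 else 0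

/-- The positive roots of type Bₙ: eᵢ, eᵢ - eⱼ and eᵢ + eⱼ for i < j. -/
def PosB (n : ℕ) : Set (Fin n → ℤ) :=
  {v | (∃ i, v = eB n i) ∨ (∃ i j : Fin n, i < j ∧ v = eB n i - eB n j) ∨
    (∃ i j : Fin n, i < j ∧ v = eB n i + eB n j)}

/-- The root poset order of type Bₙ: coordinatewise comparison over the simple roots
αᵢ = eᵢ - eᵢ₊₁ (i < n), αₙ = eₙ, i.e. comparison of all prefix sums. -/
def rleB (n : ℕ) (v w : Fin n → ℤ) : Prop :=
  ∀ k : Fin n, ∑ i ∈ Finset.univ.filter (· ≤ k), v i ≤ ∑ i ∈ Finset.univ.filter (· ≤ k), w i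

/- ### auxiliary development -/

def SB (n : ℕ) (v : Fin n → ℤ) (k : Fin n) : ℤ := ∑ i ∈ Finset.univ.filter (· ≤ k), v i

lemma SB_eB (n : ℕ) (i k : Fin n) : SB n (eB n i) k = if i ≤ k then 1 else 0 := by
  unfold SB eB
  rw [Finset.sum_ite_eq' (Finset.univ.filter (· ≤ k)) i (fun _ => (1:ℤ))]
  simp

lemma SB_sub (n : ℕ) (v w : Fin n → ℤ) (k : Fin n) :
    SB n (v - w) k = SB n v k - SB n w k := by
  simp [SB, Finset.sum_sub_distrib]

lemma SB_add (n : ℕ) (v w : Fin n → ℤ) (k : Fin n) :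
    SB n (v + w) k = SB n v k + SB n w k := by
  simp [SB, Finset.sum_add_distrib]

lemma rleB_of {n : ℕ} {v w : Fin n → ℤ} (h : ∀ k, SB n v k ≤ SB n w k) : rleB n v w := h

lemma rleB_SB {n : ℕ} {v w : Fin n → ℤ} (h : rleB n v w) (k : Fin n) :
    SB n v k ≤ SB n w k := h k

lemma SB_nonneg {n : ℕ} {v : Fin n → ℤ} (hv : v ∈ PosB n) (k : Fin n) : 0 ≤ SB n v k := by
  rcases hv with ⟨i, rfl⟩ | ⟨i, j, hij, rfl⟩ | ⟨i, j, hij, rfl⟩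
  · rw [SB_eB]; split_ifs <;> omega
  · rw [SB_sub, SB_eB, SB_eB]; split_ifs <;> omega
  · rw [SB_add, SB_eB, SB_eB]; split_ifs <;> omega

lemma SB_pos_somewhere {n : ℕ} {v : Fin n → ℤ} (hv : v ∈ PosB n) : ∃ k, 1 ≤ SB n v k := by
  rcases hv with ⟨i, rfl⟩ | ⟨i, j, hij, rfl⟩ | ⟨i, j, hij, rfl⟩
  · exact ⟨i, by rw [SB_eB]; split_ifs <;> omega⟩
  · exact ⟨i, by rw [SB_sub, SB_eB, SB_eB]; split_ifs <;> omega⟩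
  · exact ⟨i, by rw [SB_add, SB_eB, SB_eB]; split_ifs <;> omega⟩

lemma first_index {n : ℕ} {v : Fin n → ℤ} (hv : v ∈ PosB n) (t : Fin n)
    (hlow : ∀ k : Fin n, (k : ℕ) < (t : ℕ) → SB n v k = 0) (ht : 1 ≤ SB n v t) :
    v = eB n t ∨ ∃ j : Fin n, t < j ∧ (v = eB n t - eB n j ∨ v = eB n t + eB n j) := by
  rcases hv with ⟨i, rfl⟩ | ⟨i, j, hij, rfl⟩ | ⟨i, j, hij, rfl⟩
  · left
    have h1 : i ≤ t := by rw [SB_eB] at ht; split_ifs at ht <;> omega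
    have h2 : ¬ (i : ℕ) < (t : ℕ) := by
      intro h
      have h0 := hlow i h
      rw [SB_eB] at h0
      split_ifs at h0 <;> omega
    have : i = t := by omega
    rw [this]
  · have h1 : i ≤ t ∧ ¬ j ≤ t := by
      rw [SB_sub, SB_eB, SB_eB] at ht; split_ifs at ht <;> omega
    have h2 : ¬ (i : ℕ) < (t : ℕ) := by
      intro h
      have h0 := hlow i h
      rw [SB_sub, SB_eB, SB_eB] at h0
      split_ifs at h0 <;> omega
    have hi : i = t := by omega
    exact Or.inr ⟨j, by omega, Or.inl (by rw [hi])⟩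
  · have h2 : ¬ (i : ℕ) < (t : ℕ) := by
      intro h
      have h0 := hlow i h
      rw [SB_add, SB_eB, SB_eB] at h0
      split_ifs at h0 <;> omega
    have h1 : i ≤ t := by
      rw [SB_add, SB_eB, SB_eB] at ht; split_ifs at ht <;> omega
    have hi : i = t := by omega
    exact Or.inr ⟨j, by omega, Or.inr (by rw [hi])⟩

lemma comp_forms {n : ℕ} (t : Fin n) {v w : Fin n → ℤ}
    (hv : v = eB n t ∨ ∃ j : Fin n, t < j ∧ (v = eB n t - eB n j ∨ v = eB n t + eB n j))
    (hw : w = eB n t ∨ ∃ j : Fin n, t < j ∧ (w = eB n t - eB n j ∨ w = eB n t + eB n j)) :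
    rleB n v w ∨ rleB n w v := by
  rcases hv with rfl | ⟨j, htj, rfl | rfl⟩ <;>
    rcases hw with rfl | ⟨j', htj', rfl | rfl⟩
  all_goals try {
    left
    refine rleB_of fun k => ?_
    simp only [SB_sub, SB_add, SB_eB]; split_ifs <;> omega }
  all_goals try {
    right
    refine rleB_of fun k => ?_
    simp only [SB_sub, SB_add, SB_eB]; split_ifs <;> omega }
  all_goals {
    rcases le_total j j' with h | h
    · first
      | { left
          refine rleB_of fun k => ?_
          simp only [SB_sub, SB_add, SB_eB]; split_ifs <;> omega }
      | { right
          refine rleB_of fun k => ?_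
          simp only [SB_sub, SB_add, SB_eB]; split_ifs <;> omega }
    · first
      | { left
          refine rleB_of fun k => ?_
          simp only [SB_sub, SB_add, SB_eB]; split_ifs <;> omega }
      | { right
          refine rleB_of fun k => ?_
          simp only [SB_sub, SB_add, SB_eB]; split_ifs <;> omega } }

lemma min_root {n : ℕ} (t t1 : Fin n) (htt : (t1 : ℕ) = (t : ℕ) + 1) {y : Fin n → ℤ}
    (hy : y ∈ PosB n) (hle : rleB n y (eB n t - eB n t1)) : y = eB n t - eB n t1 := by
  have hle' : ∀ k, SB n y k ≤ SB n (eB n t - eB n t1) k := hle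
  have hn0 : 0 < n := t.pos
  set klast : Fin n := ⟨n - 1, by omega⟩ with hkl
  have hklv : (klast : ℕ) = n - 1 := by rw [hkl]
  rcases hy with ⟨i, rfl⟩ | ⟨i, j, hij, rfl⟩ | ⟨i, j, hij, rfl⟩
  · exfalso
    have h := hle' klast
    rw [SB_eB, SB_sub, SB_eB, SB_eB] at h
    split_ifs at h <;> omega
  · have h1 := hle' i
    have h2 := hle' t1
    rw [SB_sub, SB_sub, SB_eB, SB_eB, SB_eB, SB_eB] at h1 h2
    have hij' : i = t ∧ j = t1 := by split_ifs at h1 h2 <;> omega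
    rw [hij'.1, hij'.2]
  · exfalso
    have h := hle' klast
    rw [SB_add, SB_sub, SB_eB, SB_eB, SB_eB, SB_eB] at h
    split_ifs at h <;> omega

lemma peel_aux (n : ℕ) : ∀ d t : ℕ, t + d = n → ∀ I : Set (Fin n → ℤ), I ⊆ PosB n →
    (∀ v ∈ I, ∀ w ∈ PosB n, rleB n w v → w ∈ I) →
    (∀ v ∈ I, ∀ k : Fin n, (k : ℕ) < t → SB n v k = 0) →
    ChainPeelable (rleB n) I := by
  intro d
  induction d with
  | zero =>
    intro t ht I hIP _ hsupp
    apply ChainPeelable.chain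
    have hempty : I = ∅ := by
      ext v
      simp only [Set.mem_empty_iff_false, iff_false]
      intro hv
      obtain ⟨k, hk⟩ := SB_pos_somewhere (hIP hv)
      have := hsupp v hv k (by omega)
      omega
    rw [hempty]
    exact Set.pairwise_empty _
  | succ d ih =>
    intro t ht I hIP hideal hsupp
    have htn : t < n := by omega
    set tF : Fin n := ⟨t, htn⟩ with htFdef
    have htFv : (tF : ℕ) = t := by rw [htFdef]
    have hlow : ∀ v ∈ I, ∀ k : Fin n, (k : ℕ) < (tF : ℕ) → SB n v k = 0 := by
      intro v hv k hk
      exact hsupp v hv k (by omega)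
    by_cases hF : ∃ v ∈ I, 1 ≤ SB n v tF
    · obtain ⟨v0, hv0I, hv0⟩ := hF
      set F : Set (Fin n → ℤ) := {v | v ∈ I ∧ 1 ≤ SB n v tF} with hFdef
      have hforms : ∀ v ∈ F, v = eB n tF ∨
          ∃ j : Fin n, tF < j ∧ (v = eB n tF - eB n j ∨ v = eB n tF + eB n j) := by
        intro v hv
        exact first_index (hIP hv.1) tF (hlow v hv.1) hv.2
      by_cases htn1 : t + 1 < n
      · set t1 : Fin n := ⟨t + 1, htn1⟩ with ht1def
        have ht1v : (t1 : ℕ) = t + 1 := by rw [ht1def]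
        set m : Fin n → ℤ := eB n tF - eB n t1 with hmdef
        have hmP : m ∈ PosB n := Or.inr (Or.inl ⟨tF, t1, by omega, rfl⟩)
        have hmle : ∀ v ∈ F, rleB n m v := by
          intro v hv
          apply rleB_of
          intro k
          have h0 := SB_nonneg (hIP hv.1) k
          have h1 := hv.2
          rw [hmdef, SB_sub, SB_eB, SB_eB]
          rcases eq_or_ne k tF with rfl | hne
          · split_ifs <;> omega
          · split_ifs <;> omega
        have hmI : m ∈ I := hideal v0 hv0I m hmP (hmle v0 ⟨hv0I, hv0⟩)
        have hmF : m ∈ F := by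
          refine ⟨hmI, ?_⟩
          rw [hmdef, SB_sub, SB_eB, SB_eB]
          split_ifs <;> omega
        apply ChainPeelable.peel I F (fun v hv => hv.1)
        · intro a ha b hb _
          exact comp_forms tF (hforms a ha) (hforms b hb)
        · intro x hx y hy hxy
          exact ⟨hy, le_trans hx.2 (rleB_SB hxy tF)⟩
        · refine ⟨m, hmF, ?_⟩
          intro y hy hym
          rw [hmdef] at hym ⊢
          exact min_root tF t1 (by omega) (hIP hy) hym
        · apply ih (t + 1) (by omega) (I \ F)
          · intro v hv; exact hIP hv.1
          · intro v hv w hw hwv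
            refine ⟨hideal v hv.1 w hw hwv, ?_⟩
            intro hwF
            apply hv.2
            exact ⟨hv.1, le_trans hwF.2 (rleB_SB hwv tF)⟩
          · intro v hv k hk
            rcases Nat.lt_or_ge (k : ℕ) t with h | h
            · exact hsupp v hv.1 k h
            · have hkt : k = tF := by omega
              have h0 : ¬ 1 ≤ SB n v tF := fun hc => hv.2 ⟨hv.1, hc⟩
              have h1 := SB_nonneg (hIP hv.1) tF
              rw [hkt]
              omega
      · -- t + 1 = n : I is a chain (subset of {eB tF})
        apply ChainPeelable.chain
        have hsingle : ∀ v ∈ I, v = eB n tF := by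
          intro v hv
          by_cases h1 : 1 ≤ SB n v tF
          · rcases first_index (hIP hv) tF (hlow v hv) h1 with h | ⟨j, hj, _⟩
            · exact h
            · exfalso; have := j.isLt; omega
          · exfalso
            obtain ⟨k, hk⟩ := SB_pos_somewhere (hIP hv)
            rcases Nat.lt_or_ge (k : ℕ) t with h | h
            · have := hsupp v hv k h; omega
            · have hkt : k = tF := by have := k.isLt; omega
              rw [hkt] at hk
              exact h1 hk
        intro a ha b hb hab
        exact absurd ((hsingle a ha).trans (hsingle b hb).symm) hab
    · push_neg at hF
      apply ih (t + 1) (by omega) I hIP hideal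
      intro v hv k hk
      rcases Nat.lt_or_ge (k : ℕ) t with h | h
      · exact hsupp v hv k h
      · have hkt : k = tF := by omega
        have h0 := hF v hv
        have h1 := SB_nonneg (hIP hv) tF
        rw [hkt]
        omega


/-- The type Bₙ root poset (n ≥ 2) is chain peelable; consequently every order ideal of it
is chain peelable. -/
theorem typeB_chainPeelable (n : ℕ) (hn : 2 ≤ n) :
    ChainPeelable (rleB n) (PosB n) ∧
    ∀ I ⊆ PosB n, (∀ v ∈ I, ∀ w ∈ PosB n, rleB n w v → w ∈ I) →
      ChainPeelable (rleB n) I := by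
  have hmain : ∀ I ⊆ PosB n, (∀ v ∈ I, ∀ w ∈ PosB n, rleB n w v → w ∈ I) →
      ChainPeelable (rleB n) I := by
    intro I hI hideal
    exact peel_aux n n 0 (by omega) I hI hideal (fun v hv k hk => absurd hk (Nat.not_lt_zero _))
  exact ⟨hmain (PosB n) le_rfl (fun v hv w hw _ => hw), hmain⟩
end

section
/- In the type F₄ root poset, for every simple root α, the order filter F(α) = {γ ∈ Φ⁺ : γ ≥ α} generated by α in the ideal Î of all positive roots of height at most 4 is not a chain; consequently Î is not chain peelable. -/
/-- The ideal Î of positive roots of height at most 4 in the type F₄ root poset, recorded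
by coordinates over the simple roots α₁, α₂, α₃, α₄ and ordered coordinatewise. -/
def F4IdealHat : Set (Fin 4 → ℤ) :=
  {![1,0,0,0], ![0,1,0,0], ![0,0,1,0], ![0,0,0,1],
   ![1,1,0,0], ![0,1,1,0], ![0,0,1,1],
   ![1,1,1,0], ![0,2,1,0], ![0,1,1,1],
   ![1,2,1,0], ![1,1,1,1], ![0,2,1,1]}

/-- A set containing two incomparable elements is not a chain. -/
lemma not_isChain_of_incomp {S : Set (Fin 4 → ℤ)} (a b : Fin 4 → ℤ)
    (ha : a ∈ S) (hb : b ∈ S) (hne : a ≠ b) (h1 : ¬ a ≤ b) (h2 : ¬ b ≤ a) :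
    ¬ IsChain (· ≤ ·) S := fun hc => (hc ha hb hne).elim h1 h2

/-- In the ideal Î of positive roots of height ≤ 4 in the type F₄ root poset, the order
filter generated by each simple root is not a chain; consequently Î is not chain
peelable. -/
theorem F4_hat_not_chainPeelable :
    (∀ α ∈ ({![1,0,0,0], ![0,1,0,0], ![0,0,1,0], ![0,0,0,1]} : Set (Fin 4 → ℤ)),
      ¬ IsChain (· ≤ ·) {γ ∈ F4IdealHat | α ≤ γ}) ∧
    ¬ ChainPeelable (· ≤ ·) F4IdealHat := by
  have h1 : ∀ α ∈ ({![1,0,0,0], ![0,1,0,0], ![0,0,1,0], ![0,0,0,1]} : Set (Fin 4 → ℤ)),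
      ¬ IsChain (· ≤ ·) {γ ∈ F4IdealHat | α ≤ γ} := by
    intro α hα
    simp only [Set.mem_insert_iff, Set.mem_singleton_iff] at hα
    rcases hα with h|h|h|h <;> subst h
    · exact not_isChain_of_incomp ![1,2,1,0] ![1,1,1,1]
        ⟨by simp [F4IdealHat], by intro i; fin_cases i <;> simp⟩
        ⟨by simp [F4IdealHat], by intro i; fin_cases i <;> simp⟩
        (by decide) (fun h => by have := h 1; simp at this)
        (fun h => by have := h 3; simp at this)
    · exact not_isChain_of_incomp ![1,2,1,0] ![0,2,1,1]
        ⟨by simp [F4IdealHat], by intro i; fin_cases i <;> simp⟩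
        ⟨by simp [F4IdealHat], by intro i; fin_cases i <;> simp⟩
        (by decide) (fun h => by have := h 0; simp at this)
        (fun h => by have := h 3; simp at this)
    · exact not_isChain_of_incomp ![1,2,1,0] ![0,2,1,1]
        ⟨by simp [F4IdealHat], by intro i; fin_cases i <;> simp⟩
        ⟨by simp [F4IdealHat], by intro i; fin_cases i <;> simp⟩
        (by decide) (fun h => by have := h 0; simp at this)
        (fun h => by have := h 3; simp at this)
    · exact not_isChain_of_incomp ![1,1,1,1] ![0,2,1,1]
        ⟨by simp [F4IdealHat], by intro i; fin_cases i <;> simp⟩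
        ⟨by simp [F4IdealHat], by intro i; fin_cases i <;> simp⟩
        (by decide) (fun h => by have := h 0; simp at this)
        (fun h => by have := h 1; simp at this)
  refine ⟨h1, ?_⟩
  intro hcp
  cases hcp with
  | chain _ hc =>
      exact not_isChain_of_incomp ![1,0,0,0] ![0,1,0,0]
        (by simp [F4IdealHat]) (by simp [F4IdealHat])
        (by decide) (fun h => by have := h 0; simp at this)
        (fun h => by have := h 1; simp at this) hc
  | peel _ F hFs hchain hfilter hmin hrest =>
      obtain ⟨m, hmF, hm⟩ := hmin
      have hms := hFs hmF
      have hsub : {γ ∈ F4IdealHat | m ≤ γ} ⊆ F := fun γ ⟨hγ, hle⟩ => hfilter m hmF γ hγ hle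
      have hfc : IsChain (· ≤ ·) {γ ∈ F4IdealHat | m ≤ γ} := hchain.mono hsub
      simp only [F4IdealHat, Set.mem_insert_iff, Set.mem_singleton_iff] at hms
      rcases hms with h|h|h|h|h|h|h|h|h|h|h|h|h <;> subst h
      · exact h1 _ (by simp) hfc
      · exact h1 _ (by simp) hfc
      · exact h1 _ (by simp) hfc
      · exact h1 _ (by simp) hfc
      · exact absurd (hm ![1,0,0,0] (by simp [F4IdealHat])
          (by intro i; fin_cases i <;> simp)) (by decide)
      · exact absurd (hm ![0,1,0,0] (by simp [F4IdealHat])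
          (by intro i; fin_cases i <;> simp)) (by decide)
      · exact absurd (hm ![0,0,1,0] (by simp [F4IdealHat])
          (by intro i; fin_cases i <;> simp)) (by decide)
      · exact absurd (hm ![1,0,0,0] (by simp [F4IdealHat])
          (by intro i; fin_cases i <;> simp)) (by decide)
      · exact absurd (hm ![0,1,0,0] (by simp [F4IdealHat])
          (by intro i; fin_cases i <;> simp)) (by decide)
      · exact absurd (hm ![0,1,0,0] (by simp [F4IdealHat])
          (by intro i; fin_cases i <;> simp)) (by decide)
      · exact absurd (hm ![1,0,0,0] (by simp [F4IdealHat])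
          (by intro i; fin_cases i <;> simp)) (by decide)
      · exact absurd (hm ![1,0,0,0] (by simp [F4IdealHat])
          (by intro i; fin_cases i <;> simp)) (by decide)
      · exact absurd (hm ![0,1,0,0] (by simp [F4IdealHat])
          (by intro i; fin_cases i <;> simp)) (by decide)
end

section
/- Let Φ be a simply laced finite crystallographic root system and I ⊆ Φ⁺ a star ideal with roots γ₄ = α₁+α₂+α₃, γ₃ = α₁+α₂+α₄, γ₁ = α₂+α₃+α₄ as in the definition. Then the set S = {α₂, γ₁, γ₃, γ₄} is 2-closed in I but is not a flat of I, since α₁ = (1/2)(γ₃ + γ₄ − γ₁ − α₂) lies in span(S) ∩ I but not in S. Hence I, viewed as an arrangement of vectors, is not line-closed. -/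
open scoped RealInnerProductSpace

/-- In a simply laced root system, a star ideal I is not line-closed: the set
S = {α₂, γ₁, γ₃, γ₄} is 2-closed in I but not a flat, since
α₁ = (1/2)(γ₃ + γ₄ - γ₁ - α₂) lies in I ∩ span S but not in S. -/
theorem star_ideal_not_line_closed {V : Type*} [NormedAddCommGroup V] [InnerProductSpace ℝ V]
    {ι : Type*} [Fintype ι] (R : RootSystemData V) (B : RootBase R ι)
    (hSL : R.SimplyLaced)
    (I : Set V) (hI : I ⊆ B.Pos)
    (hideal : ∀ γ ∈ I, ∀ δ, B.IsPos δ → B.rle δ γ → δ ∈ I)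
    (i₁ i₂ i₃ i₄ : ι) (hnd : ([i₁, i₂, i₃, i₄] : List ι).Nodup)
    (γ₁ γ₃ γ₄ : V)
    (hγ₄ : γ₄ = B.b i₁ + B.b i₂ + B.b i₃) (hγ₃ : γ₃ = B.b i₁ + B.b i₂ + B.b i₄)
    (hγ₁ : γ₁ = B.b i₂ + B.b i₃ + B.b i₄)
    (hγ₄I : γ₄ ∈ R.Φ ∩ I) (hγ₃I : γ₃ ∈ R.Φ ∩ I) (hγ₁I : γ₁ ∈ R.Φ ∩ I)
    (S : Set V) (hS : S = {B.b i₂, γ₁, γ₃, γ₄}) :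
    (∀ x ∈ S, ∀ y ∈ S, I ∩ (Submodule.span ℝ ({x, y} : Set V) : Set V) ⊆ S) ∧
    B.b i₁ = (1 / 2 : ℝ) • (γ₃ + γ₄ - γ₁ - B.b i₂) ∧
    B.b i₁ ∈ I ∩ (Submodule.span ℝ S : Set V) ∧ B.b i₁ ∉ S ∧
    ¬ (I ∩ (Submodule.span ℝ S : Set V) = S) ∧
    ¬ (∀ T ⊆ I, (∀ x ∈ T, ∀ y ∈ T, I ∩ (Submodule.span ℝ ({x, y} : Set V) : Set V) ⊆ T) →
        I ∩ (Submodule.span ℝ T : Set V) = T) := by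
  classical
  simp only [List.nodup_cons, List.mem_cons, List.mem_singleton, List.not_mem_nil,
    List.nodup_nil, and_true, not_or, not_false_eq_true] at hnd
  obtain ⟨⟨h12, h13, h14⟩, ⟨h23, h24⟩, h34⟩ := hnd
  have h21 : i₂ ≠ i₁ := fun h => h12 h.symm
  have h31 : i₃ ≠ i₁ := fun h => h13 h.symm
  have h41 : i₄ ≠ i₁ := fun h => h14 h.symm
  have h32 : i₃ ≠ i₂ := fun h => h23 h.symm
  have h42 : i₄ ≠ i₂ := fun h => h24 h.symm
  have h43 : i₄ ≠ i₃ := fun h => h34 h.symm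
  have hΦs : ∀ i, B.b i ∈ R.Φ := B.simple_mem
  set N : ℝ := ⟪B.b i₂, B.b i₂⟫ with hNdef
  have hN : ∀ γ ∈ R.Φ, ⟪γ, γ⟫ = N := fun γ hγ => hSL γ hγ _ (hΦs i₂)
  have hb0 : ∀ i, B.b i ≠ 0 := fun i => R.nonzero _ (hΦs i)
  have selfpos : ∀ v : V, v ≠ 0 → (0:ℝ) < ⟪v, v⟫ := fun v hv =>
    lt_of_le_of_ne real_inner_self_nonneg (Ne.symm (inner_self_ne_zero.2 hv))
  have hNpos : (0:ℝ) < N := selfpos _ (hb0 i₂)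
  have hN0 : N ≠ 0 := ne_of_gt hNpos
  -- L1 : off-diagonal Cartan entries are 0 or -1
  have L1 : ∀ i j : ι, i ≠ j → 2 * ⟪B.b i, B.b j⟫ = 0 ∨ 2 * ⟪B.b i, B.b j⟫ = -N := by
    intro i j hij
    obtain ⟨n, hn⟩ := R.crystallographic (B.b i) (hΦs i) (B.b j) (hΦs j)
    rw [hN _ (hΦs i)] at hn
    have hn' : 2 * ⟪B.b i, B.b j⟫ = (n : ℝ) * N := by
      field_simp at hn; linarith only [hn]
    have hsub : B.b i - B.b j ≠ 0 := sub_ne_zero.2 (fun h => hij (B.b.injective h))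
    have hadd : B.b i + B.b j ≠ 0 := by
      intro h
      have := congrArg (fun v => B.b.repr v i) h
      simp only [map_add, Finsupp.add_apply, Module.Basis.repr_self, Finsupp.single_apply,
        if_pos rfl, if_neg (Ne.symm hij), map_zero, Finsupp.coe_zero, Pi.zero_apply] at this
      norm_num at this
    have p1 : (0:ℝ) < ⟪B.b i - B.b j, B.b i - B.b j⟫ := selfpos _ hsub
    have p2 : (0:ℝ) < ⟪B.b i + B.b j, B.b i + B.b j⟫ := selfpos _ hadd
    simp only [inner_sub_left, inner_sub_right, inner_add_left, inner_add_right] at p1 p2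
    rw [hN _ (hΦs i), hN _ (hΦs j)] at p1 p2
    have hcomm := real_inner_comm (B.b i) (B.b j)
    have q1 : (0:ℝ) < 2*N - 2*⟪B.b i, B.b j⟫ := by linarith only [p1, hcomm]
    have q2 : (0:ℝ) < 2*N + 2*⟪B.b i, B.b j⟫ := by linarith only [p2, hcomm]
    have hbound1 : (-2:ℝ) < (n:ℝ) := by nlinarith only [q2, hn', hNpos]
    have hbound2 : ((n:ℝ)) < 2 := by nlinarith only [q1, hn', hNpos]
    have hbz1 : (-2:ℤ) < n := by exact_mod_cast hbound1
    have hbz2 : n < (2:ℤ) := by exact_mod_cast hbound2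
    have hcases : n = -1 ∨ n = 0 ∨ n = 1 := by omega
    rcases hcases with h | h | h
    · right; rw [hn', h]; push_cast; ring
    · left; rw [hn', h]; push_cast; ring
    · exfalso
      have href := R.reflect_mem (B.b i) (hΦs i) (B.b j) (hΦs j)
      rw [hN _ (hΦs i)] at href
      have hcoef : 2 * ⟪B.b i, B.b j⟫ / N = 1 := by rw [hn, h]; norm_num
      rw [hcoef, one_smul] at href
      rcases B.coord_sign _ href with hs | hs
      · have := hs i
        simp only [map_sub, Finsupp.sub_apply, Module.Basis.repr_self, Finsupp.single_apply,
          if_pos rfl, if_neg (Ne.symm hij)] at this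
        norm_num at this
      · have := hs j
        simp only [map_sub, Finsupp.sub_apply, Module.Basis.repr_self, Finsupp.single_apply,
          if_pos rfl, if_neg hij] at this
        norm_num at this
  -- inner product bookkeeping
  have c12 := real_inner_comm (B.b i₁) (B.b i₂)
  have c13 := real_inner_comm (B.b i₁) (B.b i₃)
  have c14 := real_inner_comm (B.b i₁) (B.b i₄)
  have c23 := real_inner_comm (B.b i₂) (B.b i₃)
  have c24 := real_inner_comm (B.b i₂) (B.b i₄)
  have c34 := real_inner_comm (B.b i₃) (B.b i₄)
  have n1 := hN _ (hΦs i₁)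
  have n2 := hN _ (hΦs i₂)
  have n3 := hN _ (hΦs i₃)
  have n4 := hN _ (hΦs i₄)
  have E4 : 2*⟪B.b i₁, B.b i₂⟫ + 2*⟪B.b i₁, B.b i₃⟫ + 2*⟪B.b i₂, B.b i₃⟫ = -2*N := by
    have h := hN γ₄ hγ₄I.1
    rw [hγ₄] at h
    simp only [inner_add_left, inner_add_right] at h
    linarith only [h, c12, c13, c23, n1, n2, n3]
  have E3 : 2*⟪B.b i₁, B.b i₂⟫ + 2*⟪B.b i₁, B.b i₄⟫ + 2*⟪B.b i₂, B.b i₄⟫ = -2*N := by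
    have h := hN γ₃ hγ₃I.1
    rw [hγ₃] at h
    simp only [inner_add_left, inner_add_right] at h
    linarith only [h, c12, c14, c24, n1, n2, n4]
  have E1 : 2*⟪B.b i₂, B.b i₃⟫ + 2*⟪B.b i₂, B.b i₄⟫ + 2*⟪B.b i₃, B.b i₄⟫ = -2*N := by
    have h := hN γ₁ hγ₁I.1
    rw [hγ₁] at h
    simp only [inner_add_left, inner_add_right] at h
    linarith only [h, c23, c24, c34, n2, n3, n4]
  have hvne : B.b i₁ + B.b i₂ + B.b i₃ + B.b i₄ ≠ 0 := by
    intro h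
    have := congrArg (fun v => B.b.repr v i₁) h
    simp only [map_add, Finsupp.add_apply, Module.Basis.repr_self, Finsupp.single_apply,
      if_pos rfl, if_neg h21, if_neg h31, if_neg h41, map_zero, Finsupp.coe_zero,
      Pi.zero_apply] at this
    norm_num at this
  have Ev : (0:ℝ) < 4*N + (2*⟪B.b i₁, B.b i₂⟫ + 2*⟪B.b i₁, B.b i₃⟫ + 2*⟪B.b i₁, B.b i₄⟫
      + 2*⟪B.b i₂, B.b i₃⟫ + 2*⟪B.b i₂, B.b i₄⟫ + 2*⟪B.b i₃, B.b i₄⟫) := by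
    have h : (0:ℝ) < ⟪B.b i₁ + B.b i₂ + B.b i₃ + B.b i₄,
        B.b i₁ + B.b i₂ + B.b i₃ + B.b i₄⟫ := selfpos _ hvne
    simp only [inner_add_left, inner_add_right] at h
    linarith only [h, c12, c13, c14, c23, c24, c34, n1, n2, n3, n4]
  have bd : ∀ i j : ι, i ≠ j → -N ≤ 2*⟪B.b i, B.b j⟫ ∧ 2*⟪B.b i, B.b j⟫ ≤ 0 := by
    intro i j hij
    rcases L1 i j hij with h | h <;> constructor <;> linarith only [h, hNpos]
  obtain ⟨b13a, b13b⟩ := bd _ _ h13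
  obtain ⟨b14a, b14b⟩ := bd _ _ h14
  obtain ⟨b23a, b23b⟩ := bd _ _ h23
  obtain ⟨b24a, b24b⟩ := bd _ _ h24
  obtain ⟨b34a, b34b⟩ := bd _ _ h34
  have e12 : 2*⟪B.b i₁, B.b i₂⟫ = -N := by
    rcases L1 _ _ h12 with h | h
    · exfalso
      linarith only [h, E4, E3, E1, Ev, b13a, b13b, b14a, b14b, b23a, b23b, b24a, b24b,
        b34a, b34b]
    · exact h
  have e23 : 2*⟪B.b i₂, B.b i₃⟫ = -N := by
    rcases L1 _ _ h23 with h | h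
    · exfalso
      linarith only [h, E4, E3, E1, Ev, b13a, b13b, b14a, b14b, b24a, b24b, b34a, b34b, e12]
    · exact h
  have e24 : 2*⟪B.b i₂, B.b i₄⟫ = -N := by
    rcases L1 _ _ h24 with h | h
    · exfalso
      linarith only [h, E4, E3, E1, Ev, b13a, b13b, b14a, b14b, b34a, b34b, e12, e23]
    · exact h
  have e13 : ⟪B.b i₁, B.b i₃⟫ = 0 := by linarith only [E4, e12, e23]
  have e14 : ⟪B.b i₁, B.b i₄⟫ = 0 := by linarith only [E3, e12, e24]
  have e34 : ⟪B.b i₃, B.b i₄⟫ = 0 := by linarith only [E1, e23, e24]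
  -- orthogonality of the pairs in S
  have o21 : ⟪B.b i₂, γ₁⟫ = 0 := by
    rw [hγ₁]; simp only [inner_add_right]
    linarith only [e23, e24, n2]
  have o23 : ⟪B.b i₂, γ₃⟫ = 0 := by
    rw [hγ₃]; simp only [inner_add_right]
    linarith only [e12, e24, n2, c12]
  have o24 : ⟪B.b i₂, γ₄⟫ = 0 := by
    rw [hγ₄]; simp only [inner_add_right]
    linarith only [e12, e23, n2, c12]
  have o13 : ⟪γ₁, γ₃⟫ = 0 := by
    rw [hγ₁, hγ₃]; simp only [inner_add_left, inner_add_right]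
    linarith only [e12, e23, e24, e13, e14, e34, c12, c13, c14, c23, c24, c34, n1, n2, n3, n4]
  have o14 : ⟪γ₁, γ₄⟫ = 0 := by
    rw [hγ₁, hγ₄]; simp only [inner_add_left, inner_add_right]
    linarith only [e12, e23, e24, e13, e14, e34, c12, c13, c14, c23, c24, c34, n1, n2, n3, n4]
  have o34 : ⟪γ₃, γ₄⟫ = 0 := by
    rw [hγ₃, hγ₄]; simp only [inner_add_left, inner_add_right]
    linarith only [e12, e23, e24, e13, e14, e34, c12, c13, c14, c23, c24, c34, n1, n2, n3, n4]
  -- simple roots are positive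
  have posb : ∀ i, B.IsPos (B.b i) := by
    intro i
    refine ⟨hΦs i, fun j => ?_⟩
    simp only [Module.Basis.repr_self, Finsupp.single_apply]
    split_ifs <;> norm_num
  have rle14 : B.rle (B.b i₁) γ₄ := by
    intro j
    rw [hγ₄]
    simp only [map_add, Finsupp.add_apply, Module.Basis.repr_self, Finsupp.single_apply]
    split_ifs <;> norm_num
  have rle24 : B.rle (B.b i₂) γ₄ := by
    intro j
    rw [hγ₄]
    simp only [map_add, Finsupp.add_apply, Module.Basis.repr_self, Finsupp.single_apply]
    split_ifs <;> norm_num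
  have hα1I : B.b i₁ ∈ I := hideal γ₄ hγ₄I.2 _ (posb i₁) rle14
  have hα2I : B.b i₂ ∈ I := hideal γ₄ hγ₄I.2 _ (posb i₂) rle24
  -- the key identity
  have keyid : B.b i₁ = (1 / 2 : ℝ) • (γ₃ + γ₄ - γ₁ - B.b i₂) := by
    rw [hγ₁, hγ₃, hγ₄]; module
  -- membership data for S
  have SinΦ : ∀ x ∈ S, x ∈ R.Φ := by
    rw [hS]
    rintro x (rfl | rfl | rfl | rfl)
    exacts [hΦs i₂, hγ₁I.1, hγ₃I.1, hγ₄I.1]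
  have SsubI : ∀ x ∈ S, x ∈ I := by
    rw [hS]
    rintro x (rfl | rfl | rfl | rfl)
    exacts [hα2I, hγ₁I.2, hγ₃I.2, hγ₄I.2]
  have SinPos : ∀ x ∈ S, B.IsPos x := fun x hx => hI (SsubI x hx)
  have orth : ∀ x ∈ S, ∀ y ∈ S, x ≠ y → ⟪x, y⟫ = 0 := by
    rw [hS]
    rintro x (rfl | rfl | rfl | rfl) y (rfl | rfl | rfl | rfl) hxy <;>
      first
      | exact absurd rfl hxy
      | exact o21 | exact o23 | exact o24 | exact o13 | exact o14 | exact o34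
      | (rw [real_inner_comm];
         first | exact o21 | exact o23 | exact o24 | exact o13 | exact o14 | exact o34)
  -- a positive root cannot be the negative of a positive root
  have negpos : ∀ x : V, x ∈ R.Φ → B.IsPos x → ∀ δ : V, B.IsPos δ → δ = -x → False := by
    intro x hxΦ hxp δ hδp hδx
    apply R.nonzero x hxΦ
    have hz : ∀ j, B.b.repr x j = 0 := by
      intro j
      have h1 := hxp.2 j
      have h2 := hδp.2 j
      rw [hδx] at h2
      simp only [map_neg, Finsupp.neg_apply] at h2
      linarith only [h1, h2]
    have : B.b.repr x = 0 := Finsupp.ext hz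
    exact B.b.repr.map_eq_zero_iff.mp this
  -- 2-closedness
  have two : ∀ x ∈ S, ∀ y ∈ S, I ∩ (Submodule.span ℝ ({x, y} : Set V) : Set V) ⊆ S := by
    intro x hx y hy δ hδ
    obtain ⟨hδI, hδsp⟩ := hδ
    obtain ⟨a, c, hac⟩ := Submodule.mem_span_pair.1 hδsp
    have hδp : B.IsPos δ := hI hδI
    have hδΦ : δ ∈ R.Φ := hδp.1
    have hxΦ := SinΦ x hx
    have hyΦ := SinΦ y hy
    have hxp := SinPos x hx
    have hyp := SinPos y hy
    by_cases hxy : x = y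
    · subst hxy
      have hδ' : (a + c) • x = δ := by rw [← hac]; module
      rcases R.reduced x hxΦ (a + c) (hδ' ▸ hδΦ) with h1 | h1
      · have : δ = x := by rw [← hδ', h1, one_smul]
        rw [this]; exact hx
      · exfalso
        exact negpos x hxΦ hxp δ hδp (by rw [← hδ', h1, neg_one_smul])
    · have hxy0 : ⟪x, y⟫ = 0 := orth x hx y hy hxy
      have hyx0 : ⟪y, x⟫ = 0 := by rw [real_inner_comm]; exact hxy0
      have nx := hN x hxΦ
      have ny := hN y hyΦ
      have nδ := hN δ hδΦ
      have habc : a ^ 2 + c ^ 2 = 1 := by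
        have h := nδ
        rw [← hac] at h
        simp only [inner_add_left, inner_add_right, real_inner_smul_left,
          real_inner_smul_right, hxy0, hyx0, nx, ny, mul_zero, add_zero, zero_add] at h
        have h3 : (a ^ 2 + c ^ 2) * N = 1 * N := by linear_combination h
        exact mul_right_cancel₀ hN0 h3
      obtain ⟨n, hn⟩ := R.crystallographic x hxΦ δ hδΦ
      obtain ⟨m, hm⟩ := R.crystallographic y hyΦ δ hδΦ
      have hax : ⟪x, δ⟫ = a * N := by
        rw [← hac]
        simp only [inner_add_right, real_inner_smul_right, hxy0, nx, mul_zero, add_zero]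
      have hcy : ⟪y, δ⟫ = c * N := by
        rw [← hac]
        simp only [inner_add_right, real_inner_smul_right, hyx0, ny, mul_zero, zero_add]
      rw [nx, hax] at hn
      rw [ny, hcy] at hm
      have hna : 2 * a = (n : ℝ) := by
        have h4 : (2 * a) * N = (n : ℝ) * N := by
          field_simp at hn; rw [hn]
        exact mul_right_cancel₀ hN0 h4
      have hmc : 2 * c = (m : ℝ) := by
        have h4 : (2 * c) * N = (m : ℝ) * N := by
          field_simp at hm; rw [hm]
        exact mul_right_cancel₀ hN0 h4
      have hnm : (n : ℝ) ^ 2 + (m : ℝ) ^ 2 = 4 := by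
        rw [← hna, ← hmc]; linear_combination 4 * habc
      have hnmz : n ^ 2 + m ^ 2 = 4 := by exact_mod_cast hnm
      have hnn : n * n + m * m = 4 := by linear_combination hnmz
      have hb1a : -2 ≤ n := by nlinarith only [hnn, mul_self_nonneg m, mul_self_nonneg (n+2)]
      have hb1b : n ≤ 2 := by nlinarith only [hnn, mul_self_nonneg m, mul_self_nonneg (n-2)]
      have hb2a : -2 ≤ m := by nlinarith only [hnn, mul_self_nonneg n, mul_self_nonneg (m+2)]
      have hb2b : m ≤ 2 := by nlinarith only [hnn, mul_self_nonneg n, mul_self_nonneg (m-2)]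
      have hcase : (n = 2 ∧ m = 0) ∨ (n = -2 ∧ m = 0) ∨ (n = 0 ∧ m = 2) ∨ (n = 0 ∧ m = -2) := by
        interval_cases n <;> interval_cases m <;> omega
      rcases hcase with ⟨hn2, hm2⟩ | ⟨hn2, hm2⟩ | ⟨hn2, hm2⟩ | ⟨hn2, hm2⟩ <;>
        rw [hn2] at hna <;> rw [hm2] at hmc <;> push_cast at hna hmc
      · have ha : a = 1 := by linarith only [hna]
        have hc : c = 0 := by linarith only [hmc]
        have : δ = x := by rw [← hac, ha, hc]; simp
        rw [this]; exact hx
      · exfalso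
        have ha : a = -1 := by linarith only [hna]
        have hc : c = 0 := by linarith only [hmc]
        exact negpos x hxΦ hxp δ hδp (by rw [← hac, ha, hc]; simp)
      · have ha : a = 0 := by linarith only [hna]
        have hc : c = 1 := by linarith only [hmc]
        have : δ = y := by rw [← hac, ha, hc]; simp
        rw [this]; exact hy
      · exfalso
        have ha : a = 0 := by linarith only [hna]
        have hc : c = -1 := by linarith only [hmc]
        exact negpos y hyΦ hyp δ hδp (by rw [← hac, ha, hc]; simp)
  -- span membership
  have hspan : B.b i₁ ∈ Submodule.span ℝ S := by
    rw [keyid]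
    refine Submodule.smul_mem _ _ ?_
    have m2 : B.b i₂ ∈ S := by rw [hS]; left; rfl
    have m1 : γ₁ ∈ S := by rw [hS]; right; left; rfl
    have m3 : γ₃ ∈ S := by rw [hS]; right; right; left; rfl
    have m4 : γ₄ ∈ S := by rw [hS]; right; right; right; rfl
    exact sub_mem (sub_mem (add_mem (Submodule.subset_span m3) (Submodule.subset_span m4))
      (Submodule.subset_span m1)) (Submodule.subset_span m2)
  -- b i₁ ∉ S
  have hnotS : B.b i₁ ∉ S := by
    rw [hS]
    simp only [Set.mem_insert_iff, Set.mem_singleton_iff, not_or]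
    refine ⟨fun h => h12 (B.b.injective h), ?_, ?_, ?_⟩
    · intro h
      have := congrArg (fun v => B.b.repr v i₁) h
      rw [hγ₁] at this
      simp only [map_add, Finsupp.add_apply, Module.Basis.repr_self, Finsupp.single_apply,
        if_pos rfl, if_neg h21, if_neg h31, if_neg h41] at this
      norm_num at this
    · intro h
      have := congrArg (fun v => B.b.repr v i₄) h
      rw [hγ₃] at this
      simp only [map_add, Finsupp.add_apply, Module.Basis.repr_self, Finsupp.single_apply,
        if_pos rfl, if_neg h14, if_neg h24, if_neg h12] at this
      norm_num at this
    · intro h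
      have := congrArg (fun v => B.b.repr v i₃) h
      rw [hγ₄] at this
      simp only [map_add, Finsupp.add_apply, Module.Basis.repr_self, Finsupp.single_apply,
        if_pos rfl, if_neg h13, if_neg h23, if_neg h12] at this
      norm_num at this
  have hmem : B.b i₁ ∈ I ∩ (Submodule.span ℝ S : Set V) := ⟨hα1I, hspan⟩
  refine ⟨two, keyid, hmem, hnotS, ?_, ?_⟩
  · intro h
    exact hnotS (by rw [← h]; exact hmem)
  · intro h
    have heq := h S (fun x hx => SsubI x hx) two
    exact hnotS (by rw [← heq]; exact hmem)
end

section
/- In the type D₄ root poset with simple roots α₁, α₃, α₄ the leaves and α₂ the central node, the order ideal I consisting of all positive roots of height at most 3 contains the three pairwise incomparable roots α₁+α₂+α₃, α₁+α₂+α₄, α₂+α₃+α₄, each of which generates an order filter of I that is not a chain; consequently I is not chain peelable. -/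
/-- The ideal of positive roots of height at most 3 in the type D₄ root poset, recorded by
coordinates over the simple roots α₁, α₂, α₃, α₄ (α₂ the central node) and ordered
coordinatewise. -/
def D4Ideal : Set (Fin 4 → ℤ) :=
  {![1,0,0,0], ![0,1,0,0], ![0,0,1,0], ![0,0,0,1],
   ![1,1,0,0], ![0,1,1,0], ![0,1,0,1],
   ![1,1,1,0], ![1,1,0,1], ![0,1,1,1]}

local instance : DecidableRel ((· ≤ ·) : (Fin 4 → ℤ) → (Fin 4 → ℤ) → Prop) :=
  fun a b => decidable_of_iff (∀ i, a i ≤ b i) Pi.le_def.symm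

private lemma D4.not_chain_aux {s : Set (Fin 4 → ℤ)} {a b : Fin 4 → ℤ}
    (ha : a ∈ s) (hb : b ∈ s) (hne : a ≠ b) (h1 : ¬ a ≤ b) (h2 : ¬ b ≤ a) :
    ¬ IsChain (· ≤ ·) s := fun hc => (hc ha hb hne).elim h1 h2

/-- The ideal I of positive roots of height ≤ 3 in the type D₄ root poset contains the
three pairwise incomparable roots α₁+α₂+α₃, α₁+α₂+α₄, α₂+α₃+α₄; the order filter of I
generated by each simple (minimal) root is not a chain; consequently I is not chain
peelable. -/
theorem D4_ideal_not_chainPeelable :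
    (![1,1,1,0] ∈ D4Ideal ∧ ![1,1,0,1] ∈ D4Ideal ∧ ![0,1,1,1] ∈ D4Ideal) ∧
    (∀ γ ∈ ({![1,1,1,0], ![1,1,0,1], ![0,1,1,1]} : Set (Fin 4 → ℤ)),
      ∀ γ' ∈ ({![1,1,1,0], ![1,1,0,1], ![0,1,1,1]} : Set (Fin 4 → ℤ)),
        γ ≠ γ' → ¬ γ ≤ γ' ∧ ¬ γ' ≤ γ) ∧
    (∀ α ∈ ({![1,0,0,0], ![0,1,0,0], ![0,0,1,0], ![0,0,0,1]} : Set (Fin 4 → ℤ)),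
      ¬ IsChain (· ≤ ·) {γ ∈ D4Ideal | α ≤ γ}) ∧
    ¬ ChainPeelable (· ≤ ·) D4Ideal := by
  refine ⟨⟨by simp [D4Ideal], by simp [D4Ideal], by simp [D4Ideal]⟩, ?_, ?_, ?_⟩
  · intro γ hγ γ' hγ' hne
    simp only [Set.mem_insert_iff, Set.mem_singleton_iff] at hγ hγ'
    rcases hγ with rfl | rfl | rfl <;> rcases hγ' with rfl | rfl | rfl <;>
      first
        | exact absurd rfl hne
        | exact ⟨by decide, by decide⟩
  · intro α hα
    simp only [Set.mem_insert_iff, Set.mem_singleton_iff] at hα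
    rcases hα with rfl | rfl | rfl | rfl
    · exact D4.not_chain_aux (a := ![1,1,1,0]) (b := ![1,1,0,1])
        ⟨by simp [D4Ideal], by decide⟩ ⟨by simp [D4Ideal], by decide⟩
        (by decide) (by decide) (by decide)
    · exact D4.not_chain_aux (a := ![1,1,1,0]) (b := ![1,1,0,1])
        ⟨by simp [D4Ideal], by decide⟩ ⟨by simp [D4Ideal], by decide⟩
        (by decide) (by decide) (by decide)
    · exact D4.not_chain_aux (a := ![1,1,1,0]) (b := ![0,1,1,1])
        ⟨by simp [D4Ideal], by decide⟩ ⟨by simp [D4Ideal], by decide⟩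
        (by decide) (by decide) (by decide)
    · exact D4.not_chain_aux (a := ![1,1,0,1]) (b := ![0,1,1,1])
        ⟨by simp [D4Ideal], by decide⟩ ⟨by simp [D4Ideal], by decide⟩
        (by decide) (by decide) (by decide)
  · intro hP
    cases hP with
    | chain s h =>
        exact D4.not_chain_aux (a := ![1,1,1,0]) (b := ![1,1,0,1])
          (by simp [D4Ideal]) (by simp [D4Ideal]) (by decide) (by decide) (by decide) h
    | peel s F hFs hchain hfilter hmin hrest =>
        obtain ⟨m, hmF, hm⟩ := hmin
        have hms : m ∈ D4Ideal := hFs hmF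
        simp only [D4Ideal, Set.mem_insert_iff, Set.mem_singleton_iff] at hms
        rcases hms with rfl | rfl | rfl | rfl | rfl | rfl | rfl | rfl | rfl | rfl
        · have h1 := hfilter _ hmF ![1,1,1,0] (by simp [D4Ideal]) (by decide)
          have h2 := hfilter _ hmF ![1,1,0,1] (by simp [D4Ideal]) (by decide)
          exact (hchain h1 h2 (by decide)).elim (by decide) (by decide)
        · have h1 := hfilter _ hmF ![1,1,1,0] (by simp [D4Ideal]) (by decide)
          have h2 := hfilter _ hmF ![1,1,0,1] (by simp [D4Ideal]) (by decide)
          exact (hchain h1 h2 (by decide)).elim (by decide) (by decide)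
        · have h1 := hfilter _ hmF ![1,1,1,0] (by simp [D4Ideal]) (by decide)
          have h2 := hfilter _ hmF ![0,1,1,1] (by simp [D4Ideal]) (by decide)
          exact (hchain h1 h2 (by decide)).elim (by decide) (by decide)
        · have h1 := hfilter _ hmF ![1,1,0,1] (by simp [D4Ideal]) (by decide)
          have h2 := hfilter _ hmF ![0,1,1,1] (by simp [D4Ideal]) (by decide)
          exact (hchain h1 h2 (by decide)).elim (by decide) (by decide)
        · exact absurd (hm ![1,0,0,0] (by simp [D4Ideal]) (by decide)) (by decide)
        · exact absurd (hm ![0,1,0,0] (by simp [D4Ideal]) (by decide)) (by decide)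
        · exact absurd (hm ![0,1,0,0] (by simp [D4Ideal]) (by decide)) (by decide)
        · exact absurd (hm ![1,0,0,0] (by simp [D4Ideal]) (by decide)) (by decide)
        · exact absurd (hm ![1,0,0,0] (by simp [D4Ideal]) (by decide)) (by decide)
        · exact absurd (hm ![0,1,0,0] (by simp [D4Ideal]) (by decide)) (by decide)
end
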